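/- arXiv:1604.00802 — 3 statements merged into one kernel-verified Lean document; each statement's English description precedes it below -/
import Mathlib

section
/- (Main theorem.) Let Ω ⊆ ℝ^n be open, H : Ω × ℝ^{N×n} → [0,∞) continuous such that H(x,·) is rank-one level-convex for every x ∈ Ω, and let u ∈ C¹(Ω, ℝ^N) satisfy H(x, Du(x)) = c for all x ∈ Ω, with c ≥ 0. Then for every open Ω' compactly contained in Ω, every φ ∈ W^{1,∞}_0(Ω') (Lipschitz, vanishing on ∂Ω') and every ξ ∈ ℝ^N: ess sup_{Ω'} H(·, Du) ≤ ess sup_{Ω'} H(·, Du + ξ ⊗ Dφ). -/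
open MeasureTheory

/-- A set of N×n real matrices is rank-one convex. -/
def RankOneConvex {N n : ℕ} (C : Set (Matrix (Fin N) (Fin n) ℝ)) : Prop :=
  ∀ A ∈ C, ∀ B ∈ C, (A - B).rank ≤ 1 →
    ∀ l : ℝ, l ∈ Set.Icc (0:ℝ) 1 → l • A + (1 - l) • B ∈ C

/-- The N×n Jacobian (gradient) matrix of a map `u : ℝⁿ → ℝᴺ` at a point. -/
noncomputable def gradMat {n N : ℕ}
    (u : EuclideanSpace ℝ (Fin n) → EuclideanSpace ℝ (Fin N))
    (x : EuclideanSpace ℝ (Fin n)) : Matrix (Fin N) (Fin n) ℝ :=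
  Matrix.of fun α i => fderiv ℝ u x (EuclideanSpace.single i 1) α

/-- The gradient (as a row vector) of a scalar function on ℝⁿ at a point
(junk value where the function is not differentiable; defined a.e. by Rademacher). -/
noncomputable def gradVec {n : ℕ} (g : EuclideanSpace ℝ (Fin n) → ℝ)
    (x : EuclideanSpace ℝ (Fin n)) : Fin n → ℝ :=
  fun i => fderiv ℝ g x (EuclideanSpace.single i 1)

set_option maxHeartbeats 1000000

open Filter Set in
lemma rank_aux {N n : ℕ} (w : Fin N → ℝ) (v : Fin n → ℝ) :
    (Matrix.vecMulVec w v).rank ≤ 1 := by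
  have hr : LinearMap.range (Matrix.vecMulVec w v).mulVecLin ≤ Submodule.span ℝ {w} := by
    rintro y ⟨x, rfl⟩
    have hv : (Matrix.vecMulVec w v).mulVec x = (dotProduct v x) • w := by
      funext i
      simp [Matrix.mulVec, Matrix.vecMulVec, dotProduct, Finset.mul_sum, mul_assoc,
        mul_comm, mul_left_comm]
    rw [Matrix.mulVecLin_apply, hv]
    exact Submodule.smul_mem _ _ (Submodule.mem_span_singleton_self w)
  have h2 : Module.finrank ℝ (Submodule.span ℝ ({w} : Set (Fin N → ℝ))) ≤ 1 := by
    by_cases hw : w = 0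
    · rw [hw, Submodule.span_zero_singleton]
      simp
    · rw [finrank_span_singleton hw]
  rw [Matrix.rank]
  exact le_trans (Submodule.finrank_mono hr) h2


open Filter Set in
lemma lip_incr {g : ℝ → ℝ} {K : NNReal} (hg : LipschitzWith K g) {T δ : ℝ}
    (hT : 0 < T) (hδ : 0 ≤ δ)
    (h : ∀ᵐ t ∂(volume.restrict (Set.Ioc 0 T)), ∃ d, HasDerivAt g d t ∧ δ ≤ d) :
    δ * T ≤ g T - g 0 := by
  set s : ℕ → ℝ := fun k => 1 / (k + 1) with hs
  have hspos : ∀ k, 0 < s k := fun k => by positivity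
  have hs0 : Tendsto s atTop (nhds 0) := tendsto_one_div_add_atTop_nhds_zero_nat
  have hgc : Continuous g := hg.continuous
  set q : ℕ → ℝ → ℝ := fun k t => (g (t + s k) - g t) / s k with hq
  -- lower bound on difference quotients
  have hqlb : ∀ k t, -(K : ℝ) ≤ q k t := by
    intro k t
    have := hg.dist_le_mul (t + s k) t
    rw [Real.dist_eq, Real.dist_eq] at this
    have h1 : |g (t + s k) - g t| ≤ K * s k := by
      simpa [abs_of_pos (hspos k)] using this
    have h2 : -(K * s k) ≤ g (t + s k) - g t := neg_le_of_abs_le h1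
    rw [hq]
    rw [le_div_iff₀ (hspos k)]
    linarith
  -- a.e. convergence of difference quotients to the derivative
  have hconv : ∀ (f : ℝ → ℝ) t d, HasDerivAt f d t →
      Tendsto (fun k => (f (t + s k) - f t) / s k) atTop (nhds d) := by
    intro f t d hd
    have hslope := hasDerivAt_iff_tendsto_slope.1 hd
    have htend : Tendsto (fun k => t + s k) atTop (nhdsWithin t {t}ᶜ) := by
      rw [tendsto_nhdsWithin_iff]
      constructor
      · have : Tendsto (fun k => t + s k) atTop (nhds (t + 0)) :=
          (tendsto_const_nhds.add hs0)
        simpa using this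
      · filter_upwards with k
        simp only [Set.mem_compl_iff, Set.mem_singleton_iff]
        intro hcontra
        have := hspos k
        nlinarith [hcontra]
    have := hslope.comp htend
    have heq : (fun k => slope f t (t + s k)) = fun k => (f (t + s k) - f t) / s k := by
      funext k
      rw [slope_def_field, add_sub_cancel_left]
    rwa [Function.comp_def, heq] at this
  set μ := volume.restrict (Set.Ioc 0 T) with hμ
  set p : ℕ → ℝ → ENNReal := fun k t => ENNReal.ofReal (q k t + K) with hp
  have hqcont : ∀ k, Continuous (q k) := by
    intro k
    exact ((hgc.comp (continuous_id.add continuous_const)).sub hgc).div_const _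
  have hpm : ∀ k, Measurable (p k) := fun k =>
    ((hqcont k).measurable.add_const _).ennreal_ofReal
  have hFatou := lintegral_liminf_le (μ := μ) (u := atTop) hpm
  -- lower bound for ∫⁻ liminf
  have hlow : ∀ᵐ t ∂μ, ENNReal.ofReal (δ + K) ≤ liminf (fun k => p k t) atTop := by
    filter_upwards [h] with t ht
    obtain ⟨d, hd, hdδ⟩ := ht
    have h1 : Tendsto (fun k => p k t) atTop (nhds (ENNReal.ofReal (d + K))) :=
      (ENNReal.continuous_ofReal.tendsto _).comp ((hconv g t d hd).add tendsto_const_nhds)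
    rw [h1.liminf_eq]
    exact ENNReal.ofReal_le_ofReal (by linarith)
  have hconstint : ∫⁻ _ in Set.Ioc 0 T, ENNReal.ofReal (δ + K) ∂volume
      = ENNReal.ofReal (δ + K) * ENNReal.ofReal T := by
    rw [setLIntegral_const, Real.volume_Ioc, sub_zero]
  have chain1 : ENNReal.ofReal (δ + K) * ENNReal.ofReal T ≤ ∫⁻ t, liminf (fun k => p k t) atTop ∂μ := by
    rw [← hconstint]
    exact lintegral_mono_ae hlow
  -- compute ∫⁻ p k
  have hqint : ∀ k, IntegrableOn (q k) (Set.Ioc 0 T) volume := fun k =>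
    (hqcont k).integrableOn_Ioc
  have hconstI : IntegrableOn (fun _ : ℝ => (K : ℝ)) (Set.Ioc 0 T) volume :=
    integrableOn_const measure_Ioc_lt_top.ne
  set I : ℕ → ℝ := fun k => ∫ t in Set.Ioc 0 T, q k t with hI
  have hlint : ∀ k, ∫⁻ t, p k t ∂μ = ENNReal.ofReal (I k + K * T) := by
    intro k
    have hint : Integrable (fun t => q k t + (K : ℝ)) μ := (hqint k).add hconstI
    have hnn : 0 ≤ᶠ[ae μ] fun t => q k t + (K : ℝ) :=
      Filter.Eventually.of_forall fun t => by
        have := hqlb k t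
        simp only [Pi.zero_apply]
        linarith
    have := (ofReal_integral_eq_lintegral_ofReal hint hnn).symm
    rw [hp]
    rw [this]
    congr 1
    rw [integral_add (hqint k) hconstI]
    congr 1
    rw [setIntegral_const]
    rw [Real.volume_real_Ioc, sub_zero, max_eq_left hT.le, smul_eq_mul]
    ring
  -- limit of I k
  set F : ℝ → ℝ := fun y => ∫ t in (0:ℝ)..y, g t with hF
  have hF' : ∀ y, HasDerivAt F (g y) y := fun y =>
    intervalIntegral.integral_hasDerivAt_right (hgc.intervalIntegrable _ _)
      (hgc.stronglyMeasurableAtFilter _ _) hgc.continuousAt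
  have hIeq : ∀ k, I k = (F (T + s k) - F T) / s k - (F (0 + s k) - F 0) / s k := by
    intro k
    have e0 : I k = ∫ t in (0:ℝ)..T, q k t := (intervalIntegral.integral_of_le hT.le).symm
    have e1 : ∫ t in (0:ℝ)..T, q k t
        = (∫ t in (0:ℝ)..T, (g (t + s k) - g t)) / s k := by
      rw [← intervalIntegral.integral_div]
    have e2 : ∫ t in (0:ℝ)..T, (g (t + s k) - g t)
        = (∫ t in (0:ℝ)..T, g (t + s k)) - ∫ t in (0:ℝ)..T, g t := by
      exact intervalIntegral.integral_sub
        ((hgc.comp (continuous_id.add continuous_const)).intervalIntegrable _ _)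
        (hgc.intervalIntegrable _ _)
    have e3 : ∫ t in (0:ℝ)..T, g (t + s k) = ∫ t in (0+s k)..(T + s k), g t :=
      intervalIntegral.integral_comp_add_right g (s k)
    have c1 : (∫ t in (0:ℝ)..(0 + s k), g t) + ∫ t in (0 + s k)..(T + s k), g t
        = ∫ t in (0:ℝ)..(T + s k), g t :=
      intervalIntegral.integral_add_adjacent_intervals
        (hgc.intervalIntegrable _ _) (hgc.intervalIntegrable _ _)
    have c2 : (∫ t in (0:ℝ)..T, g t) + ∫ t in T..(T + s k), g t
        = ∫ t in (0:ℝ)..(T + s k), g t :=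
      intervalIntegral.integral_add_adjacent_intervals
        (hgc.intervalIntegrable _ _) (hgc.intervalIntegrable _ _)
    have hF0 : F 0 = 0 := by simp [hF]
    have hFTs : F (T + s k) = F T + ∫ t in T..(T + s k), g t := by
      simp only [hF]
      exact c2.symm
    have hF0s : F (0 + s k) = F 0 + ∫ t in (0:ℝ)..(0 + s k), g t := by
      simp only [hF]
      simp
    rw [e0, e1, e2, e3, hFTs, hF0s, hF0]
    have : (∫ t in (0+ s k: ℝ)..(T + s k), g t)
        = (∫ t in (0:ℝ)..(T+ s k), g t) - ∫ t in (0:ℝ)..(0 + s k), g t := by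
      rw [← c1]; ring
    rw [this, ← c2]
    ring
  have htendI : Tendsto I atTop (nhds (g T - g 0)) := by
    have h1 := hconv F T (g T) (hF' T)
    have h2 := hconv F 0 (g 0) (hF' 0)
    have := h1.sub h2
    have heq : (fun k => (F (T + s k) - F T) / s k - (F (0 + s k) - F 0) / s k) = I := by
      funext k; rw [hIeq k]
    rwa [heq] at this
  have chain2 : liminf (fun k => ∫⁻ t, p k t ∂μ) atTop
      = ENNReal.ofReal (g T - g 0 + K * T) := by
    have h1 : Tendsto (fun k => ∫⁻ t, p k t ∂μ) atTop
        (nhds (ENNReal.ofReal (g T - g 0 + K * T))) := by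
      have : Tendsto (fun k => I k + K * T) atTop (nhds (g T - g 0 + K * T)) :=
        htendI.add tendsto_const_nhds
      have h2 := (ENNReal.continuous_ofReal.tendsto _).comp this
      simp only [Function.comp_def] at h2
      simpa only [hlint] using h2
    exact h1.liminf_eq
  have final : ENNReal.ofReal ((δ + K) * T) ≤ ENNReal.ofReal (g T - g 0 + K * T) := by
    rw [ENNReal.ofReal_mul (by positivity)]
    exact le_trans chain1 (le_trans hFatou (le_of_eq chain2))
  have hgK : -((K:ℝ) * T) ≤ g T - g 0 := by
    have := hg.dist_le_mul T 0
    rw [Real.dist_eq, Real.dist_eq] at this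
    have h1 : |g T - g 0| ≤ K * T := by simpa [abs_of_pos hT] using this
    linarith [neg_le_of_abs_le h1]
  have := (ENNReal.ofReal_le_ofReal_iff (by linarith)).1 final
  nlinarith


open Filter Set in
lemma fubini_line {n : ℕ} (e : EuclideanSpace ℝ (Fin n))
    (A : Set (EuclideanSpace ℝ (Fin n))) (hA : volume A = 0) (T : ℝ) :
    ∀ᵐ y ∂(volume : Measure (EuclideanSpace ℝ (Fin n))),
      ∀ᵐ t ∂(volume.restrict (Set.Ioc 0 T)), y + t • e ∉ A := by
  set A' := toMeasurable volume A with hA'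
  have hA'm : MeasurableSet A' := measurableSet_toMeasurable _ _
  have hA'0 : volume A' = 0 := by rw [hA', measure_toMeasurable]; exact hA
  set ν : Measure ℝ := volume.restrict (Set.Ioc 0 T) with hν
  set C : Set (EuclideanSpace ℝ (Fin n) × ℝ) := {p | p.1 + p.2 • e ∈ A'} with hC
  have hCm : MeasurableSet C := by
    have hcont : Continuous fun p : EuclideanSpace ℝ (Fin n) × ℝ => p.1 + p.2 • e :=
      continuous_fst.add (continuous_snd.smul continuous_const)
    exact hcont.measurable hA'm
  have hprod : (volume.prod ν) C = 0 := by
    rw [Measure.prod_apply_symm hCm]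
    have hslice : ∀ t : ℝ, volume ((fun x : EuclideanSpace ℝ (Fin n) => (x, t)) ⁻¹' C) = 0 := by
      intro t
      have : ((fun x : EuclideanSpace ℝ (Fin n) => (x, t)) ⁻¹' C)
          = (fun x : EuclideanSpace ℝ (Fin n) => x + t • e) ⁻¹' A' := rfl
      rw [this]
      rw [(measurePreserving_add_right volume (t • e)).measure_preimage hA'm.nullMeasurableSet]
      exact hA'0
    simp only [hslice]
    simp
  have := (Measure.measure_prod_null hCm).1 hprod
  filter_upwards [this] with y hy
  have : ν (Prod.mk y ⁻¹' C) = 0 := hy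
  have h2 : ∀ᵐ t ∂ν, y + t • e ∉ A' := by
    rw [ae_iff]
    have heq : {t : ℝ | ¬ y + t • e ∉ A'} = Prod.mk y ⁻¹' C := by
      ext t
      simp [hC]
    rw [heq]
    exact this
  filter_upwards [h2] with t ht hmem
  exact ht (subset_toMeasurable volume A hmem)


open Filter Set in
lemma core {n N : ℕ} {Ω : Set (EuclideanSpace ℝ (Fin n))} (hΩ : IsOpen Ω)
    {H : EuclideanSpace ℝ (Fin n) → Matrix (Fin N) (Fin n) ℝ → ℝ}
    (hHc : ContinuousOn (fun q : EuclideanSpace ℝ (Fin n) × Matrix (Fin N) (Fin n) ℝ =>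
      H q.1 q.2) (Ω ×ˢ Set.univ))
    (hHrc : ∀ x ∈ Ω, ∀ t : ℝ, RankOneConvex {P | H x P ≤ t})
    {u : EuclideanSpace ℝ (Fin n) → EuclideanSpace ℝ (Fin N)}
    (hu : ContDiffOn ℝ 1 u Ω)
    {c a : ℝ} (hHJ : ∀ x ∈ Ω, H x (gradMat u x) = c)
    {Ω' : Set (EuclideanSpace ℝ (Fin n))} (hΩ'o : IsOpen Ω')
    (hclΩ : closure Ω' ⊆ Ω) (hcpt : IsCompact (closure Ω'))
    {Φ : EuclideanSpace ℝ (Fin n) → ℝ} {L : NNReal} (hΦ : LipschitzWith L Φ)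
    (hbd : ∀ y ∈ frontier Ω', Φ y = 0)
    {ξ : EuclideanSpace ℝ (Fin N)}
    (ha : ∀ᵐ x ∂(volume.restrict Ω'),
      H x (gradMat u x + Matrix.of fun α i => ξ α * gradVec Φ x i) ≤ a)
    (hac : a < c)
    (hpos : ∃ z ∈ closure Ω', 0 < Φ z) : False := by
  classical
  have hΩ'Ω : Ω' ⊆ Ω := subset_closure.trans hclΩ
  -- maximum point
  obtain ⟨z, hz, hzpos⟩ := hpos
  obtain ⟨x₀, hx₀cl, hx₀max⟩ := hcpt.exists_isMaxOn ⟨z, hz⟩ hΦ.continuous.continuousOn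
  set m := Φ x₀ with hm
  have hmpos : 0 < m := lt_of_lt_of_le hzpos (hx₀max hz)
  have hx₀Ω' : x₀ ∈ Ω' := by
    by_contra hcon
    have : x₀ ∈ frontier Ω' := by
      rw [hΩ'o.frontier_eq]
      exact ⟨hx₀cl, hcon⟩
    have := hbd x₀ this
    linarith
  have hx₀Ω : x₀ ∈ Ω := hΩ'Ω hx₀Ω'
  set A₀ := gradMat u x₀ with hA₀
  -- continuity of the gradient matrix
  have hDu : ContinuousOn (fderiv ℝ u) Ω := hu.continuousOn_fderiv_of_isOpen hΩ le_rfl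
  have hgradMat : ContinuousOn (gradMat u) Ω := by
    apply continuousOn_pi.2
    intro α
    apply continuousOn_pi.2
    intro i
    have h1 : Continuous fun T : EuclideanSpace ℝ (Fin n) →L[ℝ] EuclideanSpace ℝ (Fin N) =>
        T (EuclideanSpace.single i 1) α := by
      have h2 : Continuous fun T : EuclideanSpace ℝ (Fin n) →L[ℝ] EuclideanSpace ℝ (Fin N) =>
          T (EuclideanSpace.single i 1) :=
        (ContinuousLinearMap.apply ℝ (EuclideanSpace ℝ (Fin N))
          (EuclideanSpace.single i 1)).continuous
      exact (continuous_apply α).comp ((PiLp.continuous_ofLp ..).comp h2)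
    exact h1.comp_continuousOn hDu
  -- the matrix-building map
  set Mmap : (Fin n → ℝ) → Matrix (Fin N) (Fin n) ℝ :=
    fun b => Matrix.of fun α i => ξ α * b i with hMmap
  have hMcont : Continuous Mmap := by
    apply continuous_pi
    intro α
    apply continuous_pi
    intro i
    exact continuous_const.mul (continuous_apply i)
  -- F and uniform continuity
  set F : EuclideanSpace ℝ (Fin n) × (Fin n → ℝ) → ℝ :=
    fun p => H p.1 (gradMat u p.1 + Mmap p.2) with hF
  have hFc : ContinuousOn F (Ω ×ˢ (Set.univ : Set (Fin n → ℝ))) := by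
    have hin : ContinuousOn
        (fun p : EuclideanSpace ℝ (Fin n) × (Fin n → ℝ) => (p.1, gradMat u p.1 + Mmap p.2))
        (Ω ×ˢ (Set.univ : Set (Fin n → ℝ))) :=
      (continuous_fst.continuousOn).prodMk
        (((hgradMat.comp continuous_fst.continuousOn (fun p hp => hp.1)).add
          (hMcont.comp continuous_snd).continuousOn))
    exact hHc.comp hin (fun p hp => ⟨hp.1, trivial⟩)
  set Kc : Set (EuclideanSpace ℝ (Fin n) × (Fin n → ℝ)) :=
    (closure Ω') ×ˢ (Metric.closedBall (0 : Fin n → ℝ) L) with hKc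
  have hKcpt : IsCompact Kc := hcpt.prod (isCompact_closedBall _ _)
  have hKsub : Kc ⊆ Ω ×ˢ (Set.univ : Set (Fin n → ℝ)) := fun p hp => ⟨hclΩ hp.1, trivial⟩
  have hUC := hKcpt.uniformContinuousOn_of_continuous (hFc.mono hKsub)
  rw [Metric.uniformContinuousOn_iff] at hUC
  set ε := (c - a) / 2 with hε
  have hεpos : 0 < ε := by simp only [hε]; linarith
  obtain ⟨r₂, hr₂pos, hr₂⟩ := hUC ε hεpos
  obtain ⟨r₁, hr₁pos, hr₁⟩ := Metric.isOpen_iff.1 hΩ'o x₀ hx₀Ω'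
  set r := min r₁ r₂ with hrdef
  have hrpos : 0 < r := lt_min hr₁pos hr₂pos
  have hrΩ' : Metric.ball x₀ r ⊆ Ω' := (Metric.ball_subset_ball (min_le_left _ _)).trans hr₁
  -- the convex set S
  set S : Set (Fin n → ℝ) :=
    {b | b ∈ Metric.closedBall (0 : Fin n → ℝ) (L : ℝ) ∧ H x₀ (A₀ + Mmap b) ≤ a + ε} with hS
  have hSconv : Convex ℝ S := by
    intro b₁ hb₁ b₂ hb₂ l₁ l₂ hl₁ hl₂ hsum
    constructor
    · exact (convex_closedBall (0 : Fin n → ℝ) (L : ℝ)) hb₁.1 hb₂.1 hl₁ hl₂ hsum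
    · have hrk : ((A₀ + Mmap b₁) - (A₀ + Mmap b₂)).rank ≤ 1 := by
        have heq : (A₀ + Mmap b₁) - (A₀ + Mmap b₂)
            = Matrix.vecMulVec (fun α => ξ α) (b₁ - b₂) := by
          ext α i
          simp only [Matrix.sub_apply, Matrix.add_apply, hMmap, Matrix.of_apply,
            Matrix.vecMulVec_apply, Pi.sub_apply]
          ring
        rw [heq]
        exact rank_aux _ _
      have hmem := hHrc x₀ hx₀Ω (a + ε) (A₀ + Mmap b₁) hb₁.2 (A₀ + Mmap b₂) hb₂.2 hrk
        l₁ ⟨hl₁, by linarith⟩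
      have heq2 : l₁ • (A₀ + Mmap b₁) + (1 - l₁) • (A₀ + Mmap b₂)
          = A₀ + Mmap (l₁ • b₁ + l₂ • b₂) := by
        have h12 : l₂ = 1 - l₁ := by linarith
        ext α i
        simp only [Matrix.add_apply, Matrix.smul_apply, hMmap, Matrix.of_apply,
          Pi.add_apply, Pi.smul_apply, smul_eq_mul, h12]
        ring
      have : l₁ • (A₀ + Mmap b₁) + (1 - l₁) • (A₀ + Mmap b₂) ∈ {P | H x₀ P ≤ a + ε} := hmem
      rw [heq2] at this
      exact this
  have hScl : IsClosed S := by
    have hcont : Continuous fun b : Fin n → ℝ => H x₀ (A₀ + Mmap b) := by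
      rw [continuous_iff_continuousAt]
      intro b
      have h1 : ContinuousAt
          (fun q : EuclideanSpace ℝ (Fin n) × Matrix (Fin N) (Fin n) ℝ => H q.1 q.2)
          (x₀, A₀ + Mmap b) :=
        hHc.continuousAt ((hΩ.prod isOpen_univ).mem_nhds ⟨hx₀Ω, trivial⟩)
      have h2 : ContinuousAt
          (fun b : Fin n → ℝ =>
            ((x₀ : EuclideanSpace ℝ (Fin n)), A₀ + Mmap b)) b :=
        continuousAt_const.prodMk (continuousAt_const.add hMcont.continuousAt)
      exact ContinuousAt.comp (f := fun b : Fin n → ℝ => ((x₀ : EuclideanSpace ℝ (Fin n)), A₀ + Mmap b)) h1 h2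
    have hrepr : S = Metric.closedBall (0 : Fin n → ℝ) (L : ℝ)
        ∩ (fun b => H x₀ (A₀ + Mmap b)) ⁻¹' (Set.Iic (a + ε)) := by
      ext b
      simp [hS, Set.mem_setOf_eq, Set.mem_inter_iff, Set.mem_preimage, Set.mem_Iic]
    rw [hrepr]
    exact Metric.isClosed_closedBall.inter (isClosed_Iic.preimage hcont)
  have hS0 : (0 : Fin n → ℝ) ∉ S := by
    intro h0
    have hM0 : Mmap 0 = 0 := by
      ext α i
      simp [hMmap]
    have h2 := h0.2
    rw [hM0, add_zero, hA₀, hHJ x₀ hx₀Ω] at h2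
    rw [hε] at h2
    linarith
  obtain ⟨f, δ₀, hf0, hfS⟩ := geometric_hahn_banach_point_closed hSconv hScl hS0
  have hδ₀ : 0 < δ₀ := by simpa using hf0
  set e : EuclideanSpace ℝ (Fin n) :=
    ∑ i : Fin n, (f (Pi.single i (1:ℝ) : Fin n → ℝ)) • EuclideanSpace.single i (1:ℝ) with he
  have hkey : ∀ x, gradVec Φ x ∈ S → δ₀ ≤ fderiv ℝ Φ x e := by
    intro x hx
    have hlin : fderiv ℝ Φ x e = f (gradVec Φ x) := by
      rw [he, map_sum]
      have h1 : ∀ i : Fin n,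
          fderiv ℝ Φ x ((f (Pi.single i (1:ℝ) : Fin n → ℝ)) • EuclideanSpace.single i (1:ℝ))
          = f (Pi.single i (1:ℝ)) * gradVec Φ x i := by
        intro i
        rw [_root_.map_smul, smul_eq_mul]
        rfl
      rw [Finset.sum_congr rfl (fun i _ => h1 i)]
      conv_rhs => rw [← Finset.univ_sum_single (gradVec Φ x), map_sum]
      apply Finset.sum_congr rfl
      intro i _
      have h2 : (Pi.single i (gradVec Φ x i) : Fin n → ℝ)
          = (gradVec Φ x i) • (Pi.single i (1:ℝ) : Fin n → ℝ) := by
        rw [← Pi.single_smul, smul_eq_mul, mul_one]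
      rw [h2, _root_.map_smul, smul_eq_mul]
      ring
    rw [hlin]
    exact le_of_lt (hfS _ hx)
  -- gradVec is in S a.e. on the ball
  have hgvS : ∀ x ∈ Metric.ball x₀ r,
      H x (gradMat u x + Mmap (gradVec Φ x)) ≤ a → gradVec Φ x ∈ S := by
    intro x hxball hxa
    have hnorm : gradVec Φ x ∈ Metric.closedBall (0 : Fin n → ℝ) (L : ℝ) := by
      rw [Metric.mem_closedBall, dist_zero_right]
      refine (pi_norm_le_iff_of_nonneg L.coe_nonneg).2 fun i => ?_
      have h1 : ‖fderiv ℝ Φ x (EuclideanSpace.single i (1:ℝ))‖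
          ≤ ‖fderiv ℝ Φ x‖ * ‖EuclideanSpace.single i (1:ℝ)‖ :=
        (fderiv ℝ Φ x).le_opNorm _
      rw [EuclideanSpace.norm_single, norm_one, mul_one] at h1
      exact le_trans h1 (norm_fderiv_le_of_lipschitz ℝ hΦ)
    have hxcl : (x, gradVec Φ x) ∈ Kc := ⟨subset_closure (hrΩ' hxball), hnorm⟩
    have hx₀cl' : ((x₀ : EuclideanSpace ℝ (Fin n)), gradVec Φ x) ∈ Kc := ⟨hx₀cl, hnorm⟩
    have hdist : dist ((x₀ : EuclideanSpace ℝ (Fin n)), gradVec Φ x) (x, gradVec Φ x) < r₂ := by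
      rw [Prod.dist_eq]
      simp only [dist_self]
      rw [max_eq_left dist_nonneg, dist_comm]
      exact lt_of_lt_of_le (Metric.mem_ball.1 hxball) (min_le_right _ _)
    have habs := hr₂ _ hx₀cl' _ hxcl hdist
    rw [Real.dist_eq] at habs
    have hFx : F (x, gradVec Φ x) ≤ a := hxa
    refine ⟨hnorm, ?_⟩
    have hFeq : H x₀ (A₀ + Mmap (gradVec Φ x))
        = F ((x₀ : EuclideanSpace ℝ (Fin n)), gradVec Φ x) := rfl
    rw [hFeq]
    have := abs_lt.1 habs
    linarith [this.2]
  have haeB : ∀ᵐ x ∂(volume.restrict (Metric.ball x₀ r)),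
      δ₀ ≤ fderiv ℝ Φ x e ∧ DifferentiableAt ℝ Φ x := by
    have h1 : ∀ᵐ x ∂(volume.restrict (Metric.ball x₀ r)),
        H x (gradMat u x + Mmap (gradVec Φ x)) ≤ a :=
      ae_restrict_of_ae_restrict_of_subset hrΩ' ha
    have h2 : ∀ᵐ x ∂(volume.restrict (Metric.ball x₀ r)), DifferentiableAt ℝ Φ x :=
      ae_restrict_of_ae hΦ.ae_differentiableAt
    filter_upwards [h1, h2, ae_restrict_mem measurableSet_ball] with x hx1 hx2 hx3
    exact ⟨hkey x (hgvS x hx3 hx1), hx2⟩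
  -- bad set
  set Bad : Set (EuclideanSpace ℝ (Fin n)) :=
    {x | x ∈ Metric.ball x₀ r ∧ ¬(δ₀ ≤ fderiv ℝ Φ x e ∧ DifferentiableAt ℝ Φ x)} with hBadDef
  have hBad0 : volume Bad = 0 := by
    rw [MeasureTheory.ae_restrict_iff' measurableSet_ball] at haeB
    rw [ae_iff] at haeB
    apply measure_mono_null _ haeB
    intro x hx
    simp only [Set.mem_setOf_eq, Classical.not_imp, hBadDef] at *
    exact hx
  -- parameters
  set T := r / (2 * (‖e‖ + 1)) with hT
  have hTpos : 0 < T := by positivity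
  set ρ := min (r / 2) (δ₀ * T / (2 * ((L : ℝ) + 1))) with hρ
  have hρpos : 0 < ρ := by positivity
  -- pick a good starting point
  have hfub := fubini_line e Bad hBad0 T
  have hbp : volume (Metric.ball x₀ ρ) ≠ 0 :=
    (Metric.measure_ball_pos volume x₀ hρpos).ne'
  obtain ⟨y, hyball, hy⟩ : ∃ y ∈ Metric.ball x₀ ρ,
      ∀ᵐ t ∂(volume.restrict (Set.Ioc 0 T)), y + t • e ∉ Bad := by
    by_contra hno
    push_neg at hno
    apply hbp
    apply measure_mono_null _ (ae_iff.1 hfub)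
    intro x hx
    exact fun h => hno x hx h
  -- geometry of the segment
  have hseg : ∀ t ∈ Set.Ioc (0:ℝ) T, y + t • e ∈ Metric.ball x₀ r := by
    intro t ht
    have h1 : dist (y + t • e) x₀ ≤ dist (y + t • e) y + dist y x₀ := dist_triangle _ _ _
    have h2 : dist (y + t • e) y = t * ‖e‖ := by
      rw [dist_eq_norm, add_sub_cancel_left, norm_smul, Real.norm_eq_abs, abs_of_pos ht.1]
    have h3 : dist y x₀ < ρ := Metric.mem_ball.1 hyball
    have h4 : t * ‖e‖ ≤ T * ‖e‖ := mul_le_mul_of_nonneg_right ht.2 (norm_nonneg e)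
    have h5 : T * ‖e‖ ≤ r / 2 := by
      rw [hT, div_mul_eq_mul_div, div_le_div_iff₀ (by positivity) two_pos]
      nlinarith [norm_nonneg e, hrpos.le]
    have h6 : ρ ≤ r / 2 := min_le_left _ _
    rw [Metric.mem_ball]
    have h7 : 0 < r := hrpos
    calc dist (y + t • e) x₀ ≤ t * ‖e‖ + dist y x₀ := by rw [← h2]; exact h1
      _ < r / 2 + r / 2 := by
          apply add_lt_add_of_le_of_lt (le_trans h4 h5) (lt_of_lt_of_le h3 h6)
      _ = r := by ring
  -- derivative along the segment
  set g : ℝ → ℝ := fun t => Φ (y + t • e) with hg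
  have hlinmap : LipschitzWith ‖e‖₊ (fun t : ℝ => y + t • e) := by
    apply LipschitzWith.of_dist_le_mul
    intro t s
    rw [dist_add_left, dist_eq_norm, ← sub_smul, norm_smul, Real.norm_eq_abs,
      Real.dist_eq, coe_nnnorm]
    rw [mul_comm]
  have hglip : LipschitzWith (L * ‖e‖₊) g := hΦ.comp hlinmap
  have hder : ∀ᵐ t ∂(volume.restrict (Set.Ioc 0 T)), ∃ d, HasDerivAt g d t ∧ δ₀ ≤ d := by
    filter_upwards [hy, ae_restrict_mem measurableSet_Ioc] with t hnb ht
    have hzball := hseg t ht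
    have hP : δ₀ ≤ fderiv ℝ Φ (y + t • e) e ∧ DifferentiableAt ℝ Φ (y + t • e) := by
      by_contra hcon
      exact hnb ⟨hzball, hcon⟩
    refine ⟨fderiv ℝ Φ (y + t • e) e, ?_, hP.1⟩
    have hline : HasDerivAt (fun s : ℝ => y + s • e) e t := by
      simpa using ((hasDerivAt_id t).smul_const e).const_add y
    exact hP.2.hasFDerivAt.comp_hasDerivAt t hline
  have hincr := lip_incr hglip hTpos hδ₀.le hder
  -- Φ y is close to the max
  have hy1 : m - δ₀ * T / 2 ≤ Φ y := by
    have hd := hΦ.dist_le_mul y x₀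
    rw [Real.dist_eq] at hd
    have h3 : dist y x₀ < ρ := Metric.mem_ball.1 hyball
    have h4 : ρ ≤ δ₀ * T / (2 * ((L : ℝ) + 1)) := min_le_right _ _
    have h5 : (0:ℝ) ≤ (L : ℝ) := L.coe_nonneg
    have h6 : |Φ y - Φ x₀| ≤ (L : ℝ) * ρ :=
      le_trans hd (mul_le_mul_of_nonneg_left h3.le h5)
    have h7 : (L : ℝ) * ρ ≤ δ₀ * T / 2 := by
      have h8 : 0 ≤ δ₀ * T := le_of_lt (mul_pos hδ₀ hTpos)
      calc (L:ℝ) * ρ ≤ (L:ℝ) * (δ₀ * T / (2 * ((L:ℝ) + 1))) :=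
            mul_le_mul_of_nonneg_left h4 h5
        _ ≤ δ₀ * T / 2 := by
            rw [mul_div_assoc']
            rw [div_le_div_iff₀ (by positivity) two_pos]
            nlinarith
    have h9 := neg_le_of_abs_le h6
    linarith
  -- contradiction
  have hx₁ : y + T • e ∈ closure Ω' :=
    subset_closure (hrΩ' (hseg T ⟨hTpos, le_refl T⟩))
  have hmax := hx₀max hx₁
  simp only [hg] at hincr
  have : Φ (y + T • e) ≤ m := hmax
  simp only [zero_smul, add_zero] at hincr
  have hpos2 : 0 < δ₀ * T := mul_pos hδ₀ hTpos
  linarith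

open Filter Set in
theorem stmt_13 {n N : ℕ} (Ω : Set (EuclideanSpace ℝ (Fin n))) (hΩ : IsOpen Ω)
    (H : EuclideanSpace ℝ (Fin n) → Matrix (Fin N) (Fin n) ℝ → ℝ)
    (hHnn : ∀ x ∈ Ω, ∀ P, 0 ≤ H x P)
    (hHc : ContinuousOn (fun q : EuclideanSpace ℝ (Fin n) × Matrix (Fin N) (Fin n) ℝ =>
      H q.1 q.2) (Ω ×ˢ Set.univ))
    (hHrc : ∀ x ∈ Ω, ∀ t : ℝ, RankOneConvex {P | H x P ≤ t})
    (u : EuclideanSpace ℝ (Fin n) → EuclideanSpace ℝ (Fin N))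
    (hu : ContDiffOn ℝ 1 u Ω)
    (c : ℝ) (hc : 0 ≤ c) (hHJ : ∀ x ∈ Ω, H x (gradMat u x) = c) :
    ∀ Ω' : Set (EuclideanSpace ℝ (Fin n)), IsOpen Ω' → closure Ω' ⊆ Ω →
      IsCompact (closure Ω') →
    ∀ φ : EuclideanSpace ℝ (Fin n) → ℝ, ∀ L : NNReal,
      LipschitzOnWith L φ (closure Ω') → (∀ y ∈ frontier Ω', φ y = 0) →
    ∀ ξ : EuclideanSpace ℝ (Fin N),
      essSup (fun x => H x (gradMat u x)) (volume.restrict Ω') ≤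
      essSup (fun x => H x (gradMat u x + Matrix.of fun α i => ξ α * gradVec φ x i))
        (volume.restrict Ω') := by
  intro Ω' hΩ'o hclΩ hcpt φ L hφlip hbdφ ξ
  obtain ⟨Φ, hΦlip, hΦeq⟩ := hφlip.extend_real
  have hΩ'Ω : Ω' ⊆ Ω := subset_closure.trans hclΩ
  by_cases hμ : volume.restrict Ω' = 0
  · rw [hμ]
    apply le_of_eq
    apply essSup_congr_ae
    unfold Filter.EventuallyEq
    rw [MeasureTheory.ae_zero]
    exact Filter.eventually_bot
  · have hbdΦ : ∀ y ∈ frontier Ω', Φ y = 0 := by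
      intro y hy
      rw [← hΦeq (frontier_subset_closure hy)]
      exact hbdφ y hy
    have hgveq : ∀ x ∈ Ω', gradVec φ x = gradVec Φ x := by
      intro x hx
      have hev : φ =ᶠ[nhds x] Φ :=
        Filter.eventually_of_mem (hΩ'o.mem_nhds hx) (fun y hy => hΦeq (subset_closure hy))
      funext i
      simp only [gradVec]
      rw [hev.fderiv_eq]
    have hf₁ : (fun x => H x (gradMat u x)) =ᵐ[volume.restrict Ω'] fun _ => c := by
      filter_upwards [ae_restrict_mem hΩ'o.measurableSet] with x hx
      exact hHJ x (hΩ'Ω hx)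
    rw [essSup_congr_ae hf₁, essSup_const c hμ]
    have hf₂ : (fun x => H x (gradMat u x + Matrix.of fun α i => ξ α * gradVec φ x i))
        =ᵐ[volume.restrict Ω']
        (fun x => H x (gradMat u x + Matrix.of fun α i => ξ α * gradVec Φ x i)) := by
      filter_upwards [ae_restrict_mem hΩ'o.measurableSet] with x hx
      rw [hgveq x hx]
    rw [essSup_congr_ae hf₂]
    rw [essSup, Filter.limsup_eq]
    -- boundedness: the set of essential bounds is nonempty
    have hDu : ContinuousOn (fderiv ℝ u) Ω := hu.continuousOn_fderiv_of_isOpen hΩ le_rfl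
    have hgradMat : ContinuousOn (gradMat u) Ω := by
      apply continuousOn_pi.2
      intro α
      apply continuousOn_pi.2
      intro i
      have h1 : Continuous fun T : EuclideanSpace ℝ (Fin n) →L[ℝ] EuclideanSpace ℝ (Fin N) =>
          T (EuclideanSpace.single i 1) α := by
        have h2 : Continuous fun T : EuclideanSpace ℝ (Fin n) →L[ℝ] EuclideanSpace ℝ (Fin N) =>
            T (EuclideanSpace.single i 1) :=
          (ContinuousLinearMap.apply ℝ (EuclideanSpace ℝ (Fin N))
            (EuclideanSpace.single i 1)).continuous
        exact (continuous_apply α).comp ((PiLp.continuous_ofLp ..).comp h2)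
      exact h1.comp_continuousOn hDu
    set Mmap : (Fin n → ℝ) → Matrix (Fin N) (Fin n) ℝ :=
      fun b => Matrix.of fun α i => ξ α * b i with hMmap
    have hMcont : Continuous Mmap := by
      apply continuous_pi
      intro α
      apply continuous_pi
      intro i
      exact continuous_const.mul (continuous_apply i)
    set F : EuclideanSpace ℝ (Fin n) × (Fin n → ℝ) → ℝ :=
      fun p => H p.1 (gradMat u p.1 + Mmap p.2) with hF
    have hFc : ContinuousOn F (Ω ×ˢ (Set.univ : Set (Fin n → ℝ))) := by
      have hin : ContinuousOn
          (fun p : EuclideanSpace ℝ (Fin n) × (Fin n → ℝ) => (p.1, gradMat u p.1 + Mmap p.2))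
          (Ω ×ˢ (Set.univ : Set (Fin n → ℝ))) :=
        (continuous_fst.continuousOn).prodMk
          (((hgradMat.comp continuous_fst.continuousOn (fun p hp => hp.1)).add
            (hMcont.comp continuous_snd).continuousOn))
      exact hHc.comp hin (fun p hp => ⟨hp.1, trivial⟩)
    set Kc : Set (EuclideanSpace ℝ (Fin n) × (Fin n → ℝ)) :=
      (closure Ω') ×ˢ (Metric.closedBall (0 : Fin n → ℝ) L) with hKc
    have hKcpt : IsCompact Kc := hcpt.prod (isCompact_closedBall _ _)
    have hKsub : Kc ⊆ Ω ×ˢ (Set.univ : Set (Fin n → ℝ)) := fun p hp => ⟨hclΩ hp.1, trivial⟩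
    obtain ⟨Cb, hCb⟩ := hKcpt.exists_bound_of_continuousOn (hFc.mono hKsub)
    have hnormgv : ∀ x, gradVec Φ x ∈ Metric.closedBall (0 : Fin n → ℝ) (L : ℝ) := by
      intro x
      rw [Metric.mem_closedBall, dist_zero_right]
      refine (pi_norm_le_iff_of_nonneg L.coe_nonneg).2 fun i => ?_
      have h1 : ‖fderiv ℝ Φ x (EuclideanSpace.single i (1:ℝ))‖
          ≤ ‖fderiv ℝ Φ x‖ * ‖EuclideanSpace.single i (1:ℝ)‖ :=
        (fderiv ℝ Φ x).le_opNorm _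
      rw [EuclideanSpace.norm_single, norm_one, mul_one] at h1
      exact le_trans h1 (norm_fderiv_le_of_lipschitz ℝ hΦlip)
    apply le_csInf
    · refine ⟨Cb, ?_⟩
      simp only [Set.mem_setOf_eq]
      filter_upwards [ae_restrict_mem hΩ'o.measurableSet] with x hx
      have h2 := hCb (x, gradVec Φ x) ⟨subset_closure hx, hnormgv x⟩
      have h3 : H x (gradMat u x + Matrix.of fun α i => ξ α * gradVec Φ x i)
          = F (x, gradVec Φ x) := rfl
      rw [h3]
      exact le_trans (le_abs_self _) h2
    · intro b hb
      simp only [Set.mem_setOf_eq] at hb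
      by_contra hcb
      push_neg at hcb
      by_cases hposc : ∃ z ∈ closure Ω', 0 < Φ z
      · exact core hΩ hHc hHrc hu hHJ hΩ'o hclΩ hcpt hΦlip hbdΦ hb hcb hposc
      · by_cases hnegc : ∃ z ∈ closure Ω', Φ z < 0
        · obtain ⟨z, hz, hzneg⟩ := hnegc
          have hmx : ∀ x, (Matrix.of fun α i => (-ξ) α * gradVec (fun y => -(Φ y)) x i)
              = (Matrix.of fun α i => ξ α * gradVec Φ x i) := by
            intro x
            ext α i
            simp only [Matrix.of_apply, gradVec, fderiv_fun_neg, ContinuousLinearMap.neg_apply]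
            have : (-ξ) α = -(ξ α) := rfl
            rw [this]
            ring
          have hb'' : ∀ᵐ x ∂(volume.restrict Ω'),
              H x (gradMat u x
                + Matrix.of fun α i => (-ξ) α * gradVec (fun y => -(Φ y)) x i) ≤ b := by
            filter_upwards [hb] with x hx
            rw [hmx x]
            exact hx
          have hbdneg : ∀ y ∈ frontier Ω', (fun y => -(Φ y)) y = 0 := by
            intro y hy
            simp only [neg_eq_zero]
            exact hbdΦ y hy
          exact core hΩ hHc hHrc hu hHJ hΩ'o hclΩ hcpt hΦlip.neg
            hbdneg hb'' hcb ⟨z, hz, by show (0:ℝ) < -(Φ z); linarith⟩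
        · push_neg at hposc hnegc
          have hzero : ∀ z ∈ closure Ω', Φ z = 0 := fun z hz =>
            le_antisymm (hposc z hz) (hnegc z hz)
          have hgv0 : ∀ x ∈ Ω', gradVec Φ x = 0 := by
            intro x hx
            have hev : Φ =ᶠ[nhds x] (fun _ => (0:ℝ)) :=
              Filter.eventually_of_mem (hΩ'o.mem_nhds hx)
                (fun y hy => hzero y (subset_closure hy))
            funext i
            simp only [gradVec]
            rw [hev.fderiv_eq, fderiv_fun_const]
            simp
          have hae : ∀ᵐ x ∂(volume.restrict Ω'), False := by
            filter_upwards [hb, ae_restrict_mem hΩ'o.measurableSet] with x hx1 hx2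
            rw [hgv0 x hx2] at hx1
            have hz2 : (Matrix.of fun α i => ξ α * (0 : Fin n → ℝ) i)
                = (0 : Matrix (Fin N) (Fin n) ℝ) := by
              ext α i
              simp
            rw [hz2, add_zero, hHJ x (hΩ'Ω hx2)] at hx1
            linarith
          rw [Filter.eventually_false_iff_eq_bot, ae_eq_bot] at hae
          exact hμ hae
end

section
/- (Strengthened localized form of the main theorem.) Under the hypotheses of the main theorem (H continuous, H(x,·) rank-one level-convex, u ∈ C¹(Ω,ℝ^N) with H(·,Du) ≡ c ≥ 0), for every open Ω' ⋐ Ω, φ ∈ W^{1,∞}_0(Ω'), ξ ∈ ℝ^N, and every open ball B_ρ(x) ⋐ Ω' centered at a point x of local extremum of φ in Ω', one has ess sup_{Ω'} H(·, Du) ≤ ess sup_{B_ρ(x)} H(·, Du + ξ ⊗ Dφ). -/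
open MeasureTheory

namespace Stmt14

def Mox {N n : ℕ} (ξ : EuclideanSpace ℝ (Fin N)) (η : Fin n → ℝ) : Matrix (Fin N) (Fin n) ℝ :=
  Matrix.of fun α i => ξ α * η i

lemma Mox_sub {N n : ℕ} (ξ : EuclideanSpace ℝ (Fin N)) (η₁ η₂ : Fin n → ℝ) :
    Mox ξ η₁ - Mox ξ η₂ = Matrix.vecMulVec ξ (η₁ - η₂) := by
  ext α i
  simp [Mox, Matrix.vecMulVec, Matrix.sub_apply]
  ring

lemma rank_vecMulVec_le {N n : ℕ} (w : Fin N → ℝ) (v : Fin n → ℝ) :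
    (Matrix.vecMulVec w v).rank ≤ 1 := by
  exact Matrix.rank_vecMulVec_le w v

lemma convex_eta {N n : ℕ} {Hx : Matrix (Fin N) (Fin n) ℝ → ℝ} {t : ℝ}
    (hrc : RankOneConvex {P | Hx P ≤ t}) (P₀ : Matrix (Fin N) (Fin n) ℝ)
    (ξ : EuclideanSpace ℝ (Fin N)) :
    Convex ℝ {η : Fin n → ℝ | Hx (P₀ + Mox ξ η) ≤ t} := by
  intro η₁ h₁ η₂ h₂ l₁ l₂ hl₁ hl₂ hsum
  have hl₂' : l₂ = 1 - l₁ := by linarith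
  have key := hrc (P₀ + Mox ξ η₁) h₁ (P₀ + Mox ξ η₂) h₂
    (by rw [add_sub_add_left_eq_sub, Mox_sub]; exact rank_vecMulVec_le ξ _)
    l₁ ⟨hl₁, by linarith⟩
  have heq : l₁ • (P₀ + Mox ξ η₁) + (1 - l₁) • (P₀ + Mox ξ η₂)
      = P₀ + Mox ξ (l₁ • η₁ + l₂ • η₂) := by
    subst hl₂'
    ext α i
    simp [Mox, Matrix.add_apply, Matrix.smul_apply, smul_eq_mul]
    ring
  rw [heq] at key
  exact key

lemma norm_fderiv_le_of_lip {n : ℕ} {φ : EuclideanSpace ℝ (Fin n) → ℝ} {L : NNReal}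
    {s : Set (EuclideanSpace ℝ (Fin n))} {y : EuclideanSpace ℝ (Fin n)}
    (hs : s ∈ nhds y) (hφ : LipschitzOnWith L φ s) : ‖fderiv ℝ φ y‖ ≤ L := by
  by_cases hd : DifferentiableAt ℝ φ y
  · exact hd.hasFDerivAt.le_of_lipschitzOn hs hφ
  · simp [fderiv_zero_of_not_differentiableAt hd]

lemma norm_gradVec_le {n : ℕ} {φ : EuclideanSpace ℝ (Fin n) → ℝ} {L : NNReal}
    {y : EuclideanSpace ℝ (Fin n)} (h : ‖fderiv ℝ φ y‖ ≤ L) : ‖gradVec φ y‖ ≤ L := by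
  rw [pi_norm_le_iff_of_nonneg L.coe_nonneg]
  intro i
  calc ‖fderiv ℝ φ y (EuclideanSpace.single i 1)‖
      ≤ ‖fderiv ℝ φ y‖ * ‖EuclideanSpace.single i (1:ℝ)‖ := (fderiv ℝ φ y).le_opNorm _
    _ ≤ L * 1 := by
        apply mul_le_mul h _ (norm_nonneg _) L.coe_nonneg
        rw [EuclideanSpace.norm_single]; simp
    _ = L := mul_one _

end Stmt14

namespace Stmt14

set_option maxHeartbeats 2000000 in
lemma key {n N : ℕ} {Ω : Set (EuclideanSpace ℝ (Fin n))} (hΩ : IsOpen Ω)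
    {H : EuclideanSpace ℝ (Fin n) → Matrix (Fin N) (Fin n) ℝ → ℝ}
    (hHc : ContinuousOn (fun q : EuclideanSpace ℝ (Fin n) × Matrix (Fin N) (Fin n) ℝ =>
      H q.1 q.2) (Ω ×ˢ Set.univ))
    (hHrc : ∀ x ∈ Ω, ∀ t : ℝ, RankOneConvex {P | H x P ≤ t})
    {u : EuclideanSpace ℝ (Fin n) → EuclideanSpace ℝ (Fin N)}
    (hDu : ContinuousOn (gradMat u) Ω)
    {c : ℝ} (hHJ : ∀ z ∈ Ω, H z (gradMat u z) = c)
    {Ω' : Set (EuclideanSpace ℝ (Fin n))} (hΩ'o : IsOpen Ω') (hclΩ : closure Ω' ⊆ Ω)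
    {φ : EuclideanSpace ℝ (Fin n) → ℝ} {L : NNReal} (hφ : LipschitzOnWith L φ (closure Ω'))
    (ξ : EuclideanSpace ℝ (Fin N))
    {x : EuclideanSpace ℝ (Fin n)} (hx : x ∈ Ω') (hmax : IsLocalMax φ x)
    {ρ : ℝ} (hρ : 0 < ρ) (hball : closure (Metric.ball x ρ) ⊆ Ω')
    {a : ℝ} (ha : a < c)
    (hae : ∀ᵐ y ∂(volume.restrict (Metric.ball x ρ)),
      H y (gradMat u y + Mox ξ (gradVec φ y)) ≤ a) : False := by
  classical
  have hρΩ' : Metric.ball x ρ ⊆ Ω' := subset_closure.trans hball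
  have hΩ'Ω : Ω' ⊆ Ω := subset_closure.trans hclΩ
  have hxΩ : x ∈ Ω := hΩ'Ω hx
  -- global Lipschitz extension of φ
  obtain ⟨φb, hφbL, heq⟩ := hφ.extend_real
  have hgv : ∀ y ∈ Ω', gradVec φ y = gradVec φb y := by
    intro y hy
    have hev : φ =ᶠ[nhds y] φb :=
      Filter.eventuallyEq_of_mem (hΩ'o.mem_nhds hy) fun z hz => heq (subset_closure hz)
    funext i
    simp only [gradVec, hev.fderiv_eq]
  have hDφb : ∀ y, ‖fderiv ℝ φb y‖ ≤ L := fun y =>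
    norm_fderiv_le_of_lip Filter.univ_mem (hφbL.lipschitzOnWith)
  have hgvb : ∀ y, ‖gradVec φb y‖ ≤ (L : ℝ) := fun y => norm_gradVec_le (hDφb y)
  -- local max radius
  obtain ⟨r₁, hr₁pos, hr₁⟩ : ∃ r₁ > 0, ∀ z ∈ Metric.ball x r₁, φ z ≤ φ x := by
    obtain ⟨r₁, hpos, h⟩ := Metric.eventually_nhds_iff_ball.1 hmax
    exact ⟨r₁, hpos, h⟩
  set r : ℝ := min r₁ ρ / 2 with hrdef
  have hrpos : 0 < r := by positivity
  have hrlt : r < min r₁ ρ := by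
    have : 0 < min r₁ ρ := lt_min hr₁pos hρ
    linarith
  have hrr₁ : Metric.closedBall x r ⊆ Metric.ball x r₁ :=
    Metric.closedBall_subset_ball (lt_of_lt_of_le hrlt (min_le_left _ _))
  have hrρ : Metric.closedBall x r ⊆ Metric.ball x ρ :=
    Metric.closedBall_subset_ball (lt_of_lt_of_le hrlt (min_le_right _ _))
  have hKΩ' : Metric.closedBall x r ⊆ Ω' := hrρ.trans hρΩ'
  have hKΩ : Metric.closedBall x r ⊆ Ω := hKΩ'.trans hΩ'Ω
  -- the uniformly continuous auxiliary function G
  set S : Set ((EuclideanSpace ℝ (Fin n)) × (Fin n → ℝ)) :=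
    (Metric.closedBall x r) ×ˢ (Metric.closedBall (0 : Fin n → ℝ) L) with hSdef
  have hScomp : IsCompact S := (isCompact_closedBall _ _).prod (isCompact_closedBall _ _)
  set G : (EuclideanSpace ℝ (Fin n)) × (Fin n → ℝ) → ℝ :=
    fun p => H p.1 (gradMat u p.1 + Mox ξ p.2) with hGdef
  have hMox : Continuous fun η : Fin n → ℝ => Mox ξ η :=
    continuous_matrix fun α i => continuous_const.mul (continuous_apply i)
  have hGc : ContinuousOn G S := by
    have hinner : ContinuousOn
        (fun p : (EuclideanSpace ℝ (Fin n)) × (Fin n → ℝ) =>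
          ((p.1, gradMat u p.1 + Mox ξ p.2) :
            (EuclideanSpace ℝ (Fin n)) × Matrix (Fin N) (Fin n) ℝ)) S := by
      apply ContinuousOn.prodMk continuousOn_fst
      exact (hDu.comp continuousOn_fst fun p hp => hKΩ hp.1).add
        ((hMox.comp continuous_snd).continuousOn)
    exact hHc.comp hinner fun p hp => ⟨hKΩ hp.1, trivial⟩
  have hUC := hScomp.uniformContinuousOn_of_continuous hGc
  obtain ⟨δ₁, hδ₁pos, hδ₁⟩ := Metric.uniformContinuousOn_iff.1 hUC ((c - a)/2) (by linarith)
  set a' : ℝ := (a + c)/2 with ha'def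
  have haa' : a < a' := by simp only [ha'def]; linarith
  have ha'c : a' < c := by simp only [ha'def]; linarith
  -- small ball near 0 in η-space where H at x is still large
  set g0 : (Fin n → ℝ) → ℝ := fun η => H x (gradMat u x + Mox ξ η) with hg0def
  have hg0c : Continuous g0 := by
    rw [continuous_iff_continuousAt]
    intro η
    have hc1 : ContinuousAt (fun q : (EuclideanSpace ℝ (Fin n)) × Matrix (Fin N) (Fin n) ℝ =>
        H q.1 q.2) (x, gradMat u x + Mox ξ η) :=
      hHc.continuousAt ((hΩ.prod isOpen_univ).mem_nhds ⟨hxΩ, trivial⟩)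
    have h2 : Continuous (fun η : Fin n → ℝ =>
        ((x, gradMat u x + Mox ξ η) : EuclideanSpace ℝ (Fin n) × Matrix (Fin N) (Fin n) ℝ)) :=
      continuous_const.prodMk (continuous_const.add hMox)
    exact ContinuousAt.comp (f := fun η : Fin n → ℝ =>
      ((x, gradMat u x + Mox ξ η) : EuclideanSpace ℝ (Fin n) × Matrix (Fin N) (Fin n) ℝ))
      hc1 h2.continuousAt
  obtain ⟨κ₀, hκ₀pos, hκ₀⟩ : ∃ κ₀ > 0, ∀ η : Fin n → ℝ, ‖η‖ < κ₀ → a' < g0 η := by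
    have hopen : IsOpen (g0 ⁻¹' Set.Ioi a') := hg0c.isOpen_preimage _ isOpen_Ioi
    have h0 : (0 : Fin n → ℝ) ∈ g0 ⁻¹' Set.Ioi a' := by
      have hM0 : Mox ξ (0 : Fin n → ℝ) = 0 := by ext α i; simp [Mox]
      simp only [Set.mem_preimage, Set.mem_Ioi, hg0def, hM0, add_zero]
      rw [hHJ x hxΩ]; exact ha'c
    obtain ⟨κ₀, hpos, hsub⟩ := Metric.isOpen_iff.1 hopen 0 h0
    exact ⟨κ₀, hpos, fun η hη => hsub (by simpa [Metric.mem_ball, dist_zero_right] using hη)⟩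
  -- the convex set A and separation
  set A : Set (Fin n → ℝ) :=
    Metric.closedBall 0 (L : ℝ) ∩ {η | H x (gradMat u x + Mox ξ η) ≤ a'} with hAdef
  have hAconv : Convex ℝ A := (convex_closedBall _ _).inter (convex_eta (hHrc x hxΩ a') _ ξ)
  have hdisj : Disjoint (Metric.ball (0 : Fin n → ℝ) κ₀) A := by
    rw [Set.disjoint_left]
    intro η hη hA
    have h1 := hκ₀ η (by simpa [Metric.mem_ball, dist_zero_right] using hη)
    have h2 := hA.2
    simp only [Set.mem_setOf_eq] at h2
    exact absurd h2 (not_le.2 h1)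
  obtain ⟨f, u₀, hfball, hfA⟩ :=
    geometric_hahn_banach_open (convex_ball _ _) Metric.isOpen_ball hAconv hdisj
  have hu₀ : 0 < u₀ := by simpa using hfball 0 (Metric.mem_ball_self hκ₀pos)
  -- the direction vector v
  have hfsum : ∀ η : Fin n → ℝ, f η = ∑ i, η i * f (fun j => if i = j then (1:ℝ) else 0) := by
    intro η
    conv_lhs => rw [pi_eq_sum_univ η, map_sum]
    exact Finset.sum_congr rfl fun i _ => by
      rw [ContinuousLinearMap.map_smul]; simp [smul_eq_mul]
  set v : EuclideanSpace ℝ (Fin n) :=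
    ∑ i, f (fun j => if i = j then (1:ℝ) else 0) • EuclideanSpace.single i (1:ℝ) with hvdef
  have hfv : ∀ y, fderiv ℝ φb y v = f (gradVec φb y) := by
    intro y
    rw [hfsum (gradVec φb y), hvdef, map_sum]
    exact Finset.sum_congr rfl fun i _ => by
      rw [ContinuousLinearMap.map_smul]; simp only [smul_eq_mul, gradVec]; ring
  -- the quantitative a.e. gradient bound near x
  set δ : ℝ := min r (δ₁ / 2) with hδdef
  have hδpos : 0 < δ := lt_min hrpos (by linarith)
  have hδr : δ ≤ r := min_le_left _ _
  have hδδ₁ : δ < δ₁ := lt_of_le_of_lt (min_le_right _ _) (by linarith)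
  have hδρ : Metric.ball x δ ⊆ Metric.ball x ρ :=
    (Metric.ball_subset_closedBall.trans (Metric.closedBall_subset_closedBall hδr)).trans
      (Metric.closedBall_subset_ball (lt_of_lt_of_le hrlt (min_le_right _ _)))
  have hkey : ∀ᵐ y ∂(volume.restrict (Metric.ball x δ)), u₀ ≤ fderiv ℝ φb y v := by
    have h1 : ∀ᵐ y ∂(volume.restrict (Metric.ball x δ)),
        H y (gradMat u y + Mox ξ (gradVec φ y)) ≤ a :=
      ae_restrict_of_ae_restrict_of_subset hδρ hae
    filter_upwards [h1, ae_restrict_mem measurableSet_ball] with y hy1 hy2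
    have hyΩ' : y ∈ Ω' := hρΩ' (hδρ hy2)
    rw [hgv y hyΩ'] at hy1
    have hηL : gradVec φb y ∈ Metric.closedBall (0 : Fin n → ℝ) (L : ℝ) := by
      simpa [Metric.mem_closedBall, dist_zero_right] using hgvb y
    have hyK : y ∈ Metric.closedBall x r :=
      Metric.ball_subset_closedBall ((Metric.ball_subset_ball hδr) hy2)
    have hS1 : (y, gradVec φb y) ∈ S := ⟨hyK, hηL⟩
    have hS2 : (x, gradVec φb y) ∈ S := ⟨Metric.mem_closedBall_self hrpos.le, hηL⟩
    have hdist : dist ((y, gradVec φb y) : _ × _) ((x, gradVec φb y) : _ × _) < δ₁ := by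
      rw [Prod.dist_eq]
      simp only [dist_self]
      rw [max_eq_left dist_nonneg]
      exact lt_trans (Metric.mem_ball.1 hy2) hδδ₁
    have hG := hδ₁ _ hS1 _ hS2 hdist
    have h3 := abs_lt.1 (by simpa [Real.dist_eq] using hG)
    have h5 : G (y, gradVec φb y) ≤ a := hy1
    have hGxy : H x (gradMat u x + Mox ξ (gradVec φb y)) ≤ a' := by
      have h6 : G (x, gradVec φb y) < G (y, gradVec φb y) + (c - a)/2 := by linarith [h3.1]
      have h7 : G (x, gradVec φb y) = H x (gradMat u x + Mox ξ (gradVec φb y)) := rfl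
      rw [h7] at h6
      simp only [ha'def]
      linarith
    have hηA : gradVec φb y ∈ A := ⟨hηL, hGxy⟩
    have hfge := hfA _ hηA
    rw [hfv y]
    exact hfge
  -- Rademacher and the translated a.e. bound
  have hrad : ∀ᵐ z ∂(volume : Measure (EuclideanSpace ℝ (Fin n))), DifferentiableAt ℝ φb z :=
    hφbL.ae_differentiableAt
  have hkey2 : ∀ᵐ z ∂(volume : Measure (EuclideanSpace ℝ (Fin n))),
      z ∈ Metric.ball x δ → u₀ ≤ fderiv ℝ φb z v :=
    (ae_restrict_iff' measurableSet_ball).1 hkey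
  -- bump function setup
  set T : ℝ := δ / (4 * (‖v‖ + 1)) with hTdef
  have hTpos : 0 < T := by positivity
  have hTv : T * ‖v‖ ≤ δ / 4 := by
    rw [hTdef, div_mul_eq_mul_div, div_le_div_iff₀ (by positivity) (by norm_num)]
    nlinarith [norm_nonneg v, hδpos.le]
  set ε : ℝ := min (δ/4) (u₀ * T / (2 * ((L:ℝ) + 1))) with hεdef
  have hεpos : 0 < ε := lt_min (by positivity) (by positivity)
  have hεδ4 : ε ≤ δ/4 := min_le_left _ _
  set g : ContDiffBump x := ⟨ε/2, 3*ε/4, by positivity, by linarith⟩ with hgdef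
  have hgsupp : Function.support (g : EuclideanSpace ℝ (Fin n) → ℝ) = Metric.ball x (3*ε/4) :=
    g.support_eq
  have hgIpos : 0 < ∫ y, (g y : ℝ) := g.integral_pos
  have hgint : Integrable (fun y => (g y : ℝ)) volume := g.integrable
  -- displacement stays in the good ball
  have hdisp : ∀ t ∈ Set.Icc (0:ℝ) T, ∀ y : EuclideanSpace ℝ (Fin n), (g y : ℝ) ≠ 0 →
      y + t • v ∈ Metric.ball x δ := by
    intro t ht y hgy
    have hy : y ∈ Metric.ball x (3*ε/4) := by
      rw [← hgsupp]; exact Function.mem_support.2 hgy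
    have h1 : dist (y + t • v) x ≤ dist (y + t • v) y + dist y x := dist_triangle _ _ _
    have h2 : dist (y + t • v) y = ‖t • v‖ := by rw [dist_eq_norm]; simp
    have h3 : ‖t • v‖ ≤ T * ‖v‖ := by
      rw [norm_smul, Real.norm_eq_abs, abs_of_nonneg ht.1]
      exact mul_le_mul_of_nonneg_right ht.2 (norm_nonneg v)
    have h4 : dist y x < 3*ε/4 := Metric.mem_ball.1 hy
    have h5 : (3:ℝ)*ε/4 < δ/2 := by linarith
    rw [Metric.mem_ball]
    calc dist (y + t • v) x ≤ ‖t • v‖ + dist y x := by rw [← h2]; exact h1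
      _ < T * ‖v‖ + 3*ε/4 := by linarith
      _ < δ := by linarith
  -- the perturbed integrals
  set F : ℝ → EuclideanSpace ℝ (Fin n) → ℝ := fun t y => φb (y + t • v) * g y with hFdef
  have hFcont : ∀ t, Continuous (F t) := fun t =>
    (hφbL.continuous.comp (continuous_id.add continuous_const)).mul g.continuous
  have hFsupp : ∀ t, HasCompactSupport (F t) := fun t =>
    HasCompactSupport.mul_left g.hasCompactSupport
  have hFint : ∀ t, Integrable (F t) volume := fun t =>
    (hFcont t).integrable_of_hasCompactSupport (hFsupp t)
  set D : ℝ → ℝ := fun t => ∫ y, fderiv ℝ φb (y + t • v) v * g y with hDdef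
  have hstep : ∀ t : ℝ,
      Integrable (fun y => fderiv ℝ φb (y + t • v) v * g y) volume ∧
      HasDerivAt (fun s => ∫ y, F s y) (D t) t := by
    intro t
    apply hasDerivAt_integral_of_dominated_loc_of_lip
      (F := F) (F' := fun y => fderiv ℝ φb (y + t • v) v * g y)
      (bound := fun y => (L:ℝ) * ‖v‖ * g y) (Metric.ball_mem_nhds t one_pos)
    · exact Filter.Eventually.of_forall fun s => (hFcont s).aestronglyMeasurable
    · exact hFint t
    · exact (((measurable_fderiv_apply_const ℝ φb v).comp
        (measurable_add_const (t • v))).mul g.continuous.measurable).aestronglyMeasurable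
    · refine Filter.Eventually.of_forall fun y => ?_
      apply LipschitzWith.lipschitzOnWith
      apply LipschitzWith.of_dist_le_mul
      intro s s'
      have h1 : dist (F s y) (F s' y) = |φb (y + s • v) - φb (y + s' • v)| * |(g y : ℝ)| := by
        simp only [hFdef, Real.dist_eq, ← sub_mul, abs_mul]
      have h2 : |φb (y + s • v) - φb (y + s' • v)| ≤ (L:ℝ) * (|s - s'| * ‖v‖) := by
        have hlip := hφbL.dist_le_mul (y + s • v) (y + s' • v)
        have hd : dist (y + s • v) (y + s' • v) = |s - s'| * ‖v‖ := by
          rw [dist_eq_norm]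
          have : y + s • v - (y + s' • v) = (s - s') • v := by
            rw [sub_smul]; abel
          rw [this, norm_smul, Real.norm_eq_abs]
        rw [hd] at hlip
        simpa [Real.dist_eq] using hlip
      have hcoe : ((Real.nnabs ((L:ℝ) * ‖v‖ * g y)) : ℝ) = (L:ℝ) * ‖v‖ * g y := by
        rw [Real.coe_nnabs, abs_of_nonneg]
        exact mul_nonneg (mul_nonneg L.coe_nonneg (norm_nonneg v)) g.nonneg
      rw [h1, hcoe]
      have hgabs : |(g y : ℝ)| = g y := abs_of_nonneg g.nonneg
      rw [hgabs]
      calc |φb (y + s • v) - φb (y + s' • v)| * (g y : ℝ)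
          ≤ ((L:ℝ) * (|s - s'| * ‖v‖)) * g y := mul_le_mul_of_nonneg_right h2 g.nonneg
        _ = (L:ℝ) * ‖v‖ * g y * dist s s' := by rw [Real.dist_eq]; ring
    · exact hgint.const_mul _
    · have htr : ∀ᵐ y ∂(volume : Measure (EuclideanSpace ℝ (Fin n))),
          DifferentiableAt ℝ φb (y + t • v) :=
        ((measurePreserving_add_right volume (t • v)).quasiMeasurePreserving).ae hrad
      filter_upwards [htr] with y hy
      have hline : HasDerivAt (fun s : ℝ => y + s • v) v t := by
        simpa using ((hasDerivAt_id t).smul_const v).const_add y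
      exact (hy.hasFDerivAt.comp_hasDerivAt t hline).mul_const _
  set J : ℝ → ℝ := fun t => ∫ y, F t y with hJdef
  set Ig : ℝ := ∫ y, (g y : ℝ) with hIgdef
  have hD_lb : ∀ t ∈ Set.Icc (0:ℝ) T, u₀ * Ig ≤ D t := by
    intro t ht
    have htr2 : ∀ᵐ y ∂(volume : Measure (EuclideanSpace ℝ (Fin n))),
        (y + t • v ∈ Metric.ball x δ → u₀ ≤ fderiv ℝ φb (y + t • v) v) :=
      ((measurePreserving_add_right volume (t • v)).quasiMeasurePreserving).ae hkey2
    have hmono : ∀ᵐ y ∂(volume : Measure (EuclideanSpace ℝ (Fin n))),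
        u₀ * g y ≤ fderiv ℝ φb (y + t • v) v * g y := by
      filter_upwards [htr2] with y hy
      by_cases hgy : (g y : ℝ) = 0
      · simp [hgy]
      · exact mul_le_mul_of_nonneg_right (hy (hdisp t ht y hgy)) g.nonneg
    have hint := integral_mono_ae (hgint.const_mul u₀) (hstep t).1 hmono
    calc u₀ * Ig = ∫ y, u₀ * g y := (integral_const_mul u₀ _).symm
      _ ≤ D t := hint
  set W : ℝ → ℝ := fun t => J t - t * (u₀ * Ig) with hWdef
  have hW : ∀ t : ℝ, HasDerivAt W (D t - u₀ * Ig) t := fun t =>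
    ((hstep t).2).sub (hasDerivAt_mul_const _)
  have hWmono : MonotoneOn W (Set.Icc 0 T) := by
    apply monotoneOn_of_deriv_nonneg (convex_Icc 0 T)
    · exact fun t _ => (hW t).continuousAt.continuousWithinAt
    · exact fun t _ => (hW t).differentiableAt.differentiableWithinAt
    · intro t ht
      rw [interior_Icc] at ht
      rw [(hW t).deriv]
      have := hD_lb t (Set.mem_Icc.2 ⟨ht.1.le, ht.2.le⟩)
      linarith
  have hmono0T := hWmono (Set.left_mem_Icc.2 hTpos.le) (Set.right_mem_Icc.2 hTpos.le) hTpos.le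
  have hchain : J 0 ≤ J T - T * (u₀ * Ig) := by
    simpa [hWdef] using hmono0T
  have hub : J T ≤ φ x * Ig := by
    have hptw : ∀ y, F T y ≤ φ x * g y := by
      intro y
      by_cases hgy : (g y : ℝ) = 0
      · simp [hFdef, hgy]
      · have hz := hdisp T (Set.right_mem_Icc.2 hTpos.le) y hgy
        have hzΩ' : y + T • v ∈ Ω' := hρΩ' (hδρ hz)
        have hzr₁ : y + T • v ∈ Metric.ball x r₁ :=
          hrr₁ (Metric.ball_subset_closedBall ((Metric.ball_subset_ball hδr) hz))
        have hφbz : φb (y + T • v) ≤ φ x := by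
          rw [← heq (subset_closure hzΩ')]
          exact hr₁ _ hzr₁
        exact mul_le_mul_of_nonneg_right hφbz g.nonneg
    calc J T ≤ ∫ y, φ x * g y := integral_mono (hFint T) (hgint.const_mul _) hptw
      _ = φ x * Ig := integral_const_mul _ _
  have hlb : (φ x - (L:ℝ) * ε) * Ig ≤ J 0 := by
    have hptw : ∀ y, (φ x - (L:ℝ) * ε) * g y ≤ F 0 y := by
      intro y
      by_cases hgy : (g y : ℝ) = 0
      · simp [hFdef, hgy]
      · have hy : y ∈ Metric.ball x (3*ε/4) := by
          rw [← hgsupp]; exact Function.mem_support.2 hgy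
        have hyδ : y ∈ Metric.ball x δ := by
          refine Metric.ball_subset_ball ?_ hy
          linarith
        have hyΩ' : y ∈ Ω' := hρΩ' (hδρ hyδ)
        have hφy : φ x - (L:ℝ) * ε ≤ φ y := by
          have hd := hφ.dist_le_mul y (subset_closure hyΩ') x (subset_closure hx)
          have hdyx : dist y x ≤ ε := le_trans (Metric.mem_ball.1 hy).le (by linarith)
          have hd2 : dist (φ y) (φ x) ≤ (L:ℝ) * ε :=
            le_trans hd (mul_le_mul_of_nonneg_left hdyx L.coe_nonneg)
          rw [Real.dist_eq] at hd2
          have habs := abs_le.1 hd2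
          linarith [habs.1]
        have hF0 : F 0 y = φ y * g y := by
          simp only [hFdef, zero_smul, add_zero]
          rw [← heq (subset_closure hyΩ')]
        rw [hF0]
        exact mul_le_mul_of_nonneg_right hφy g.nonneg
    calc (φ x - (L:ℝ) * ε) * Ig = ∫ y, (φ x - (L:ℝ) * ε) * g y := (integral_const_mul _ _).symm
      _ ≤ ∫ y, F 0 y := integral_mono (hgint.const_mul _) (hFint 0) hptw
      _ = J 0 := rfl
  have hε2 : ε ≤ u₀ * T / (2 * ((L:ℝ) + 1)) := min_le_right _ _
  have hfin : T * u₀ ≤ (L:ℝ) * ε := by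
    have h1 : T * u₀ * Ig ≤ (L:ℝ) * ε * Ig := by nlinarith [hlb, hchain, hub]
    exact le_of_mul_le_mul_right (by linarith) hgIpos
  set q : ℝ := u₀ * T / (2 * ((L:ℝ) + 1)) with hqdef
  have hqpos : 0 < q := by positivity
  have h2 : (L:ℝ) * ε ≤ (L:ℝ) * q := mul_le_mul_of_nonneg_left hε2 L.coe_nonneg
  have hq : q * (2 * ((L:ℝ) + 1)) = u₀ * T := div_mul_cancel₀ _ (by positivity)
  nlinarith [hfin, h2, hqpos, L.coe_nonneg, mul_nonneg L.coe_nonneg hqpos.le]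


end Stmt14

set_option maxHeartbeats 1000000 in
theorem stmt_14 {n N : ℕ} (Ω : Set (EuclideanSpace ℝ (Fin n))) (hΩ : IsOpen Ω)
    (H : EuclideanSpace ℝ (Fin n) → Matrix (Fin N) (Fin n) ℝ → ℝ)
    (hHnn : ∀ x ∈ Ω, ∀ P, 0 ≤ H x P)
    (hHc : ContinuousOn (fun q : EuclideanSpace ℝ (Fin n) × Matrix (Fin N) (Fin n) ℝ =>
      H q.1 q.2) (Ω ×ˢ Set.univ))
    (hHrc : ∀ x ∈ Ω, ∀ t : ℝ, RankOneConvex {P | H x P ≤ t})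
    (u : EuclideanSpace ℝ (Fin n) → EuclideanSpace ℝ (Fin N))
    (hu : ContDiffOn ℝ 1 u Ω)
    (c : ℝ) (hc : 0 ≤ c) (hHJ : ∀ x ∈ Ω, H x (gradMat u x) = c) :
    ∀ Ω' : Set (EuclideanSpace ℝ (Fin n)), IsOpen Ω' → closure Ω' ⊆ Ω →
      IsCompact (closure Ω') →
    ∀ φ : EuclideanSpace ℝ (Fin n) → ℝ, ∀ L : NNReal,
      LipschitzOnWith L φ (closure Ω') → (∀ y ∈ frontier Ω', φ y = 0) →
    ∀ ξ : EuclideanSpace ℝ (Fin N),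
    ∀ x ∈ Ω', (IsLocalMax φ x ∨ IsLocalMin φ x) →
    ∀ ρ : ℝ, 0 < ρ → closure (Metric.ball x ρ) ⊆ Ω' →
      essSup (fun y => H y (gradMat u y)) (volume.restrict Ω') ≤
      essSup (fun y => H y (gradMat u y + Matrix.of fun α i => ξ α * gradVec φ y i))
        (volume.restrict (Metric.ball x ρ)) := by
  intro Ω' hΩ'o hclΩ hcomp φ L hφ hφ0 ξ x hx hext ρ hρ hball
  classical
  have hρΩ' : Metric.ball x ρ ⊆ Ω' := subset_closure.trans hball
  have hΩ'Ω : Ω' ⊆ Ω := subset_closure.trans hclΩ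
  -- continuity of the Jacobian
  have hDu : ContinuousOn (gradMat u) Ω := by
    have h1 : ContinuousOn (fderiv ℝ u) Ω := hu.continuousOn_fderiv_of_isOpen hΩ le_rfl
    have h2 : ∀ (α : Fin N) (i : Fin n),
        ContinuousOn (fun y => fderiv ℝ u y (EuclideanSpace.single i 1) α) Ω := by
      intro α i
      have h3 : ContinuousOn (fun y => fderiv ℝ u y (EuclideanSpace.single i 1)) Ω :=
        h1.clm_apply continuousOn_const
      exact (EuclideanSpace.proj α).continuous.comp_continuousOn h3
    exact continuousOn_pi.2 fun α => continuousOn_pi.2 fun i => h2 α i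
  -- left-hand side equals c
  have hLHS : essSup (fun y => H y (gradMat u y)) (volume.restrict Ω') = c := by
    have hpos : 0 < volume Ω' := hΩ'o.measure_pos volume ⟨x, hx⟩
    have hμ : volume.restrict Ω' ≠ 0 := by
      intro h
      have h2 := congrArg (fun μ : Measure (EuclideanSpace ℝ (Fin n)) => μ Set.univ) h
      simp only [Measure.restrict_apply_univ, Measure.coe_zero, Pi.zero_apply] at h2
      exact hpos.ne' h2
    have hcongr : (fun y => H y (gradMat u y)) =ᵐ[volume.restrict Ω'] fun _ => c := by
      filter_upwards [ae_restrict_mem hΩ'o.measurableSet] with y hy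
      exact hHJ y (hΩ'Ω hy)
    rw [essSup_congr_ae hcongr, essSup_const _ hμ]
  rw [hLHS]
  set f2 : EuclideanSpace ℝ (Fin n) → ℝ :=
    fun y => H y (gradMat u y + Matrix.of fun α i => ξ α * gradVec φ y i) with hf2
  set μb : Measure (EuclideanSpace ℝ (Fin n)) := volume.restrict (Metric.ball x ρ) with hμb
  -- boundedness of f2 on the ball
  obtain ⟨M, hM⟩ : ∃ M, ∀ y ∈ Metric.ball x ρ, f2 y ≤ M := by
    set K2 : Set (EuclideanSpace ℝ (Fin n)) := closure (Metric.ball x ρ) with hK2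
    have hK2comp : IsCompact K2 :=
      (isCompact_closedBall x ρ).of_isClosed_subset isClosed_closure
        Metric.closure_ball_subset_closedBall
    have hK2Ω : K2 ⊆ Ω := hball.trans hΩ'Ω
    set S2 : Set ((EuclideanSpace ℝ (Fin n)) × (Fin n → ℝ)) :=
      K2 ×ˢ Metric.closedBall (0 : Fin n → ℝ) (L : ℝ) with hS2
    have hS2comp : IsCompact S2 := hK2comp.prod (isCompact_closedBall _ _)
    set G2 : (EuclideanSpace ℝ (Fin n)) × (Fin n → ℝ) → ℝ :=
      fun p => H p.1 (gradMat u p.1 + Stmt14.Mox ξ p.2) with hG2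
    have hMox : Continuous fun η : Fin n → ℝ => Stmt14.Mox ξ η :=
      continuous_matrix fun α i => continuous_const.mul (continuous_apply i)
    have hG2c : ContinuousOn G2 S2 := by
      have hinner : ContinuousOn
          (fun p : (EuclideanSpace ℝ (Fin n)) × (Fin n → ℝ) =>
            ((p.1, gradMat u p.1 + Stmt14.Mox ξ p.2) :
              (EuclideanSpace ℝ (Fin n)) × Matrix (Fin N) (Fin n) ℝ)) S2 := by
        apply ContinuousOn.prodMk continuousOn_fst
        exact (hDu.comp continuousOn_fst fun p hp => hK2Ω hp.1).add
          ((hMox.comp continuous_snd).continuousOn)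
      exact hHc.comp hinner fun p hp => ⟨hK2Ω hp.1, trivial⟩
    obtain ⟨M, hMb⟩ := hS2comp.exists_bound_of_continuousOn hG2c
    refine ⟨M, fun y hy => ?_⟩
    have hyΩ' : y ∈ Ω' := hρΩ' hy
    have hgvL : ‖gradVec φ y‖ ≤ (L : ℝ) :=
      Stmt14.norm_gradVec_le (Stmt14.norm_fderiv_le_of_lip (hΩ'o.mem_nhds hyΩ')
        (hφ.mono subset_closure))
    have hmem : ((y, gradVec φ y) : _ × _) ∈ S2 :=
      ⟨subset_closure hy, by simpa [Metric.mem_closedBall, dist_zero_right] using hgvL⟩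
    have := hMb _ hmem
    calc f2 y = G2 (y, gradVec φ y) := rfl
      _ ≤ ‖G2 (y, gradVec φ y)‖ := le_abs_self _
      _ ≤ M := this
  by_contra hcon
  push_neg at hcon
  have hBU : Filter.IsBoundedUnder (· ≤ ·) (ae μb) f2 := by
    refine ⟨M, Filter.eventually_map.2 ?_⟩
    filter_upwards [ae_restrict_mem measurableSet_ball] with y hy
    exact hM y hy
  set a : ℝ := (essSup f2 μb + c)/2 with hadef
  have h1 : essSup f2 μb < a := by simp only [hadef]; linarith
  have h2 : a < c := by simp only [hadef]; linarith
  have hlt : ∀ᵐ y ∂μb, f2 y < a :=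
    Filter.eventually_lt_of_limsup_lt h1 hBU
  have hae' : ∀ᵐ y ∂μb, f2 y ≤ a := hlt.mono fun y hy => hy.le
  rcases hext with hmax | hmin
  · exact Stmt14.key hΩ hHc hHrc hDu hHJ hΩ'o hclΩ hφ ξ hx hmax hρ hball h2 hae'
  · have hφneg : LipschitzOnWith L (fun z => -φ z) (closure Ω') := fun z hz w hw => by
      simpa [edist_neg_neg] using hφ hz hw
    have hfun : ∀ y, Stmt14.Mox (-ξ) (gradVec (fun z => -φ z) y) =
        Stmt14.Mox ξ (gradVec φ y) := by
      intro y
      ext α i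
      simp only [Stmt14.Mox, Matrix.of_apply, gradVec, fderiv_neg, fderiv_fun_neg,
        ContinuousLinearMap.neg_apply]
      have : (-ξ) α = -(ξ α) := rfl
      rw [this]
      ring
    have hae2 : ∀ᵐ y ∂μb,
        H y (gradMat u y + Stmt14.Mox (-ξ) (gradVec (fun z => -φ z) y)) ≤ a := by
      filter_upwards [hae'] with y hy
      rw [hfun y]
      exact hy
    exact Stmt14.key hΩ hHc hHrc hDu hHJ hΩ'o hclΩ hφneg (-ξ) hx hmin.neg hρ hball h2 hae2
end

section
/- (Scalar Eikonal case.) Let Ω ⊆ ℝ^n be open and u ∈ C¹(Ω) satisfy |Du(x)| = c for all x ∈ Ω, with c ≥ 0. Then for every open Ω' ⋐ Ω and every Lipschitz φ : Ω' → ℝ vanishing on ∂Ω', ess sup_{Ω'} |Du| ≤ ess sup_{Ω'} |Du + Dφ|; i.e., u is an absolute minimiser of the L^∞ norm of the gradient. (This is the special case N = 1, H(x,P) = |P| of the main theorem, using that the Euclidean norm is level-convex.) -/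
open MeasureTheory Filter Metric Set

/-- FTC-type inequality for Lipschitz functions on `[0,1]` with a.e. derivative bound. -/
lemma lipFTC {h : ℝ → ℝ} {K : NNReal} (hh : LipschitzWith K h) (h' : ℝ → ℝ) {C : ℝ}
    (hd : ∀ᵐ t ∂(volume.restrict (Set.Ioo (0:ℝ) 1)),
      HasDerivAt h (h' t) t ∧ |h' t| ≤ C) : |h 1 - h 0| ≤ C := by
  have hcont : Continuous h := hh.continuous
  have hres : volume.restrict (Set.Ioo (0:ℝ) 1) = volume.restrict (Set.Ioc (0:ℝ) 1) :=
    Measure.restrict_congr_set Ioo_ae_eq_Ioc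
  have hd' : ∀ᵐ t ∂(volume.restrict (Set.Ioc (0:ℝ) 1)),
      HasDerivAt h (h' t) t ∧ |h' t| ≤ C := by rwa [hres] at hd
  -- the difference quotient integrals
  set Φ : ℝ → ℝ := fun ε => ∫ t in (0:ℝ)..1, (h (t + ε) - h t) / ε with hΦ
  -- Limit 1 : DCT
  have hlim1 : Tendsto Φ (nhdsWithin 0 (Set.Ioi 0)) (nhds (∫ t in (0:ℝ)..1, h' t)) := by
    have h1 : (∫ t in (0:ℝ)..1, h' t) = ∫ t in Set.Ioc (0:ℝ) 1, h' t :=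
      intervalIntegral.integral_of_le zero_le_one
    rw [hΦ]
    have : ∀ ε : ℝ, (∫ t in (0:ℝ)..1, (h (t + ε) - h t) / ε)
        = ∫ t in Set.Ioc (0:ℝ) 1, (h (t + ε) - h t) / ε := fun ε =>
      intervalIntegral.integral_of_le zero_le_one
    simp only [this, h1]
    apply MeasureTheory.tendsto_integral_filter_of_dominated_convergence (fun _ => (K : ℝ))
    · exact Eventually.of_forall fun ε =>
        ((hcont.comp (continuous_id.add continuous_const)).sub hcont).div_const ε
          |>.aestronglyMeasurable
    · filter_upwards [self_mem_nhdsWithin] with ε (hε : ε ∈ Set.Ioi 0)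
      refine Eventually.of_forall fun t => ?_
      have := hh.dist_le_mul (t + ε) t
      rw [Real.dist_eq, Real.dist_eq] at this
      have hε0 : (0:ℝ) < ε := hε
      rw [Real.norm_eq_abs, abs_div, abs_of_pos hε0, div_le_iff₀ hε0]
      calc |h (t + ε) - h t| ≤ K * |t + ε - t| := this
        _ = K * ε := by rw [show t + ε - t = ε by ring, abs_of_pos hε0]
    · exact integrable_const _
    · filter_upwards [hd'] with t ht
      have hslope := hasDerivAt_iff_tendsto_slope.1 ht.1
      have hmap : Tendsto (fun ε : ℝ => t + ε) (nhdsWithin 0 (Set.Ioi 0))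
          (nhdsWithin t {t}ᶜ) := by
        apply tendsto_nhdsWithin_of_tendsto_nhds_of_eventually_within
        · have : Tendsto (fun ε : ℝ => t + ε) (nhds 0) (nhds (t + 0)) :=
            (continuous_const.add continuous_id).tendsto 0
          rw [add_zero] at this
          exact this.mono_left nhdsWithin_le_nhds
        · filter_upwards [self_mem_nhdsWithin] with ε (hε : ε ∈ Set.Ioi 0)
          simp only [Set.mem_compl_iff, Set.mem_singleton_iff]
          intro hc
          have h1 : (0:ℝ) < ε := hε
          have h2 : ε = 0 := by linarith [hc.symm ▸ (rfl : t + ε = t + ε), add_left_cancel (a := t) (b := ε) (c := 0) (by rw [add_zero]; exact hc)]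
          linarith
      have := hslope.comp hmap
      refine this.congr fun ε => ?_
      simp only [Function.comp_apply, slope_def_field]
      congr 1
      ring
  -- Limit 2 : via the fundamental theorem of calculus at the endpoints
  have hIoc1 : (volume : Measure ℝ) (Set.Ioc 0 1) ≠ 0 := by
    simp [Real.volume_Ioc]
  haveI : (ae (volume.restrict (Set.Ioc (0:ℝ) 1))).NeBot :=
    ae_neBot.2 (by simp [Measure.restrict_eq_zero, Real.volume_Ioc])
  have hC0 : 0 ≤ C := by
    obtain ⟨t, ht⟩ := hd'.exists
    exact le_trans (abs_nonneg _) ht.2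
  have hlim2 : Tendsto Φ (nhdsWithin 0 (Set.Ioi 0)) (nhds (h 1 - h 0)) := by
    have key : ∀ ε : ℝ, 0 < ε →
        Φ ε = (∫ t in (1:ℝ)..1+ε, h t) / ε - (∫ t in (0:ℝ)..ε, h t) / ε := by
      intro ε hε
      have hint : ∀ a b : ℝ, IntervalIntegrable h volume a b := fun a b =>
        hcont.intervalIntegrable a b
      have hint2 : IntervalIntegrable (fun t => h (t + ε)) volume 0 1 :=
        (hcont.comp (continuous_id.add continuous_const)).intervalIntegrable 0 1
      have e1 : (∫ t in (0:ℝ)..1, h (t + ε)) = ∫ t in (0+ε:ℝ)..(1+ε), h t :=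
        intervalIntegral.integral_comp_add_right h ε
      have I1 : (∫ t in (ε:ℝ)..1, h t) + (∫ t in (1:ℝ)..1+ε, h t) = ∫ t in (ε:ℝ)..1+ε, h t :=
        intervalIntegral.integral_add_adjacent_intervals (hint _ _) (hint _ _)
      have I2 : (∫ t in (0:ℝ)..ε, h t) + (∫ t in (ε:ℝ)..1, h t) = ∫ t in (0:ℝ)..1, h t :=
        intervalIntegral.integral_add_adjacent_intervals (hint _ _) (hint _ _)
      have : Φ ε = ((∫ t in (0:ℝ)..1, h (t + ε)) - ∫ t in (0:ℝ)..1, h t) / ε := by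
        rw [hΦ, ← intervalIntegral.integral_sub hint2 (hint 0 1),
          ← intervalIntegral.integral_div]
      rw [this, e1, zero_add]
      rw [div_sub_div_same]
      congr 1
      linarith
    have hF1 : HasDerivAt (fun x => ∫ t in (1:ℝ)..x, h t) (h 1) 1 :=
      intervalIntegral.integral_hasDerivAt_right (hcont.intervalIntegrable 1 1)
        hcont.stronglyMeasurable.stronglyMeasurableAtFilter hcont.continuousAt
    have hF0 : HasDerivAt (fun x => ∫ t in (0:ℝ)..x, h t) (h 0) 0 :=
      intervalIntegral.integral_hasDerivAt_right (hcont.intervalIntegrable 0 0)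
        hcont.stronglyMeasurable.stronglyMeasurableAtFilter hcont.continuousAt
    have hs1 := hasDerivAt_iff_tendsto_slope.1 hF1
    have hs0 := hasDerivAt_iff_tendsto_slope.1 hF0
    have hmap1 : Tendsto (fun ε : ℝ => 1 + ε) (nhdsWithin 0 (Set.Ioi 0))
        (nhdsWithin 1 {(1:ℝ)}ᶜ) := by
      apply tendsto_nhdsWithin_of_tendsto_nhds_of_eventually_within
      · have : Tendsto (fun ε : ℝ => 1 + ε) (nhds 0) (nhds (1 + 0)) :=
          (continuous_const.add continuous_id).tendsto 0
        rw [add_zero] at this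
        exact this.mono_left nhdsWithin_le_nhds
      · filter_upwards [self_mem_nhdsWithin] with ε (hε : ε ∈ Set.Ioi 0)
        have h1 : (0:ℝ) < ε := hε
        simp only [Set.mem_compl_iff, Set.mem_singleton_iff]
        intro hcc
        have : ε = 0 := by linarith [add_left_cancel (a := (1:ℝ)) (b := ε) (c := 0) (by rw [add_zero]; exact hcc)]
        linarith
    have hmap0 : Tendsto (fun ε : ℝ => ε) (nhdsWithin 0 (Set.Ioi 0))
        (nhdsWithin 0 {(0:ℝ)}ᶜ) :=
      tendsto_nhdsWithin_mono_right (fun x hx => by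
        simp only [Set.mem_compl_iff, Set.mem_singleton_iff]
        exact ne_of_gt hx) tendsto_id
    have htot := (hs1.comp hmap1).sub (hs0.comp hmap0)
    refine Tendsto.congr' ?_ htot
    filter_upwards [self_mem_nhdsWithin] with ε (hε : ε ∈ Set.Ioi 0)
    have hε0 : (0:ℝ) < ε := hε
    simp only [Function.comp_apply, slope_def_field]
    rw [key ε hε0]
    rw [intervalIntegral.integral_same, intervalIntegral.integral_same]
    rw [sub_zero, sub_zero]
    congr 2
    · congr 1; ring
    · ring
  have heq : h 1 - h 0 = ∫ t in (0:ℝ)..1, h' t := tendsto_nhds_unique hlim2 hlim1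
  rw [heq]
  have : |∫ t in (0:ℝ)..1, h' t| ≤ |∫ t in (0:ℝ)..1, C| := by
    rw [← Real.norm_eq_abs (∫ t in (0:ℝ)..1, h' t)]
    refine le_trans ?_ (le_abs_self _)
    apply intervalIntegral.norm_integral_le_of_norm_le zero_le_one
    · rw [← ae_restrict_iff' measurableSet_Ioc]
      filter_upwards [hd'] with t ht
      rw [Real.norm_eq_abs]
      exact ht.2
    · exact intervalIntegrable_const
  calc |∫ t in (0:ℝ)..1, h' t| ≤ |∫ t in (0:ℝ)..1, C| := this
    _ = C := by
        rw [intervalIntegral.integral_const]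
        simp [hC0]

/-- If `v` is Lipschitz on a closed ball and has `‖fderiv v‖ ≤ M` a.e. on the open ball,
then `v` is `M`-Lipschitz between points of the open ball. -/
lemma lipAE_ball {n : ℕ} {v : EuclideanSpace ℝ (Fin n) → ℝ} {K : NNReal}
    {z : EuclideanSpace ℝ (Fin n)} {R M : ℝ} (hM0 : 0 ≤ M)
    (hlip : LipschitzOnWith K v (Metric.closedBall z R))
    (hae : ∀ᵐ x : EuclideanSpace ℝ (Fin n), x ∈ Metric.ball z R →
      (DifferentiableAt ℝ v x ∧ ‖fderiv ℝ v x‖ ≤ M))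
    {a b : EuclideanSpace ℝ (Fin n)} (ha : a ∈ Metric.ball z R) (hb : b ∈ Metric.ball z R) :
    |v b - v a| ≤ M * dist b a := by
  rcases eq_or_ne b a with rfl | hne
  · simp [hM0, mul_nonneg hM0 dist_nonneg]
  set w := b - a with hw
  have hab : dist b a = ‖w‖ := by rw [dist_eq_norm]
  rw [mem_ball] at ha hb
  set δ : ℝ := min (R - dist a z) (R - dist b z) with hδ
  have hδ0 : 0 < δ := lt_min (by linarith) (by linarith)
  -- segments with offset stay in the ball
  have hseg : ∀ ζ : EuclideanSpace ℝ (Fin n), ‖ζ‖ < δ → ∀ t ∈ Set.Icc (0:ℝ) 1,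
      a + t • w + ζ ∈ Metric.ball z R := by
    intro ζ hζ t ht
    have hζa : ‖ζ‖ < R - dist a z := lt_of_lt_of_le hζ (min_le_left _ _)
    have hζb : ‖ζ‖ < R - dist b z := lt_of_lt_of_le hζ (min_le_right _ _)
    have h1 : a + ζ ∈ Metric.ball z R := by
      rw [mem_ball]
      calc dist (a + ζ) z ≤ dist (a + ζ) a + dist a z := dist_triangle _ _ _
        _ = ‖ζ‖ + dist a z := by rw [dist_eq_norm]; simp
        _ < R := by linarith
    have h2 : b + ζ ∈ Metric.ball z R := by
      rw [mem_ball]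
      calc dist (b + ζ) z ≤ dist (b + ζ) b + dist b z := dist_triangle _ _ _
        _ = ‖ζ‖ + dist b z := by rw [dist_eq_norm]; simp
        _ < R := by linarith
    have hcomb : a + t • w + ζ = (1 - t) • (a + ζ) + t • (b + ζ) := by
      rw [hw]; module
    rw [hcomb]
    exact (convex_ball z R) h1 h2 (by linarith [ht.2]) ht.1 (by ring)
  -- bad set
  obtain ⟨N, hNsub, hNmeas, hNnull⟩ := exists_measurable_superset_of_null (ae_iff.1 hae)
  have hNP : ∀ x : EuclideanSpace ℝ (Fin n), x ∉ N → x ∈ Metric.ball z R →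
      DifferentiableAt ℝ v x ∧ ‖fderiv ℝ v x‖ ≤ M := by
    intro x hx hxb
    by_contra hcon
    exact hx (hNsub (by simp only [Set.mem_setOf_eq]; intro h; exact hcon (h hxb)))
  -- Fubini: for a.e. offset ζ, the segment misses N for a.e. time
  have hmap : Measurable (fun p : (EuclideanSpace ℝ (Fin n)) × ℝ => a + p.2 • w + p.1) := by
    fun_prop
  have hmeasfun : Measurable (Function.uncurry fun (ζ : EuclideanSpace ℝ (Fin n)) (t : ℝ) =>
      N.indicator (1 : EuclideanSpace ℝ (Fin n) → ENNReal) (a + t • w + ζ)) := by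
    have : (Function.uncurry fun (ζ : EuclideanSpace ℝ (Fin n)) (t : ℝ) =>
        N.indicator (1 : EuclideanSpace ℝ (Fin n) → ENNReal) (a + t • w + ζ))
        = (N.indicator 1) ∘ (fun p : (EuclideanSpace ℝ (Fin n)) × ℝ => a + p.2 • w + p.1) := rfl
    rw [this]
    exact (measurable_one.indicator hNmeas).comp hmap
  have hswap : ∫⁻ ζ : EuclideanSpace ℝ (Fin n),
        ∫⁻ t in Set.Ioo (0:ℝ) 1, N.indicator 1 (a + t • w + ζ) ∂volume ∂volume
      = ∫⁻ t in Set.Ioo (0:ℝ) 1, ∫⁻ ζ : EuclideanSpace ℝ (Fin n),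
        N.indicator 1 (a + t • w + ζ) ∂volume ∂volume :=
    MeasureTheory.lintegral_lintegral_swap hmeasfun.aemeasurable
  have hzero : ∫⁻ ζ : EuclideanSpace ℝ (Fin n),
      ∫⁻ t in Set.Ioo (0:ℝ) 1, N.indicator 1 (a + t • w + ζ) ∂volume ∂volume = 0 := by
    rw [hswap]
    have : ∀ t : ℝ, ∫⁻ ζ : EuclideanSpace ℝ (Fin n),
        N.indicator 1 (a + t • w + ζ) ∂volume = 0 := by
      intro t
      rw [lintegral_add_left_eq_self (N.indicator 1) (a + t • w),
        lintegral_indicator_one hNmeas]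
      exact hNnull
    simp [this]
  have hmeas2 : Measurable fun ζ : EuclideanSpace ℝ (Fin n) =>
      ∫⁻ t in Set.Ioo (0:ℝ) 1, N.indicator 1 (a + t • w + ζ) ∂volume :=
    hmeasfun.lintegral_prod_right
  have key : ∀ᵐ ζ : EuclideanSpace ℝ (Fin n),
      volume ({t : ℝ | a + t • w + ζ ∈ N} ∩ Set.Ioo 0 1) = 0 := by
    have h0 := (lintegral_eq_zero_iff hmeas2).1 hzero
    filter_upwards [h0] with ζ hζ
    have hrew : (fun t : ℝ => N.indicator (1 : EuclideanSpace ℝ (Fin n) → ENNReal) (a + t • w + ζ))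
        = ({t : ℝ | a + t • w + ζ ∈ N}).indicator 1 := by
      funext t
      have h := Set.indicator_comp_right (s := N)
        (fun t : ℝ => a + t • w + ζ) (g := (1 : EuclideanSpace ℝ (Fin n) → ENNReal)) (x := t)
      simpa [Set.preimage, Function.comp] using h.symm
    change (∫⁻ t in Set.Ioo (0:ℝ) 1,
      N.indicator (1 : EuclideanSpace ℝ (Fin n) → ENNReal) (a + t • w + ζ) ∂volume) = 0 at hζ
    rw [hrew] at hζ
    have hms : MeasurableSet {t : ℝ | a + t • w + ζ ∈ N} := by
      have : {t : ℝ | a + t • w + ζ ∈ N} = (fun t : ℝ => a + t • w + ζ) ⁻¹' N := rfl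
      rw [this]
      exact hNmeas.preimage (by fun_prop)
    rw [lintegral_indicator_one hms, Measure.restrict_apply hms] at hζ
    exact hζ
  -- conclude by choosing good small offsets
  rw [hab]
  refine le_of_forall_pos_le_add fun ε hε => ?_
  set r : ℝ := min δ (ε / (2 * K + 1)) with hr
  have hK1 : (0:ℝ) < 2 * K + 1 := by positivity
  have hr0 : 0 < r := lt_min hδ0 (by positivity)
  obtain ⟨ζ, hζr, hζkey⟩ : ∃ ζ : EuclideanSpace ℝ (Fin n), ‖ζ‖ < r ∧
      volume ({t : ℝ | a + t • w + ζ ∈ N} ∩ Set.Ioo 0 1) = 0 := by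
    by_contra hcon
    push_neg at hcon
    have hsub : Metric.ball (0 : EuclideanSpace ℝ (Fin n)) r ⊆
        {ζ | ¬ volume ({t : ℝ | a + t • w + ζ ∈ N} ∩ Set.Ioo 0 1) = 0} := by
      intro ζ hζ
      have : ‖ζ‖ < r := by simpa [mem_ball, dist_zero_right] using hζ
      exact fun h => (hcon ζ this h).elim
    have hZ : volume {ζ : EuclideanSpace ℝ (Fin n) |
        ¬ volume ({t : ℝ | a + t • w + ζ ∈ N} ∩ Set.Ioo 0 1) = 0} = 0 := ae_iff.1 key
    have hpos : (0:ENNReal) < volume (Metric.ball (0 : EuclideanSpace ℝ (Fin n)) r) :=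
      Metric.measure_ball_pos volume _ hr0
    exact absurd (measure_mono_null hsub hZ) hpos.ne'
  have hζδ : ‖ζ‖ < δ := lt_of_lt_of_le hζr (min_le_left _ _)
  -- the path
  set q : ℝ → EuclideanSpace ℝ (Fin n) := fun s => a + s • w + ζ with hq
  set proj : ℝ → ℝ := fun s => (Set.projIcc (0:ℝ) 1 zero_le_one s : ℝ) with hproj
  have hprojmem : ∀ s, proj s ∈ Set.Icc (0:ℝ) 1 := fun s => (Set.projIcc (0:ℝ) 1 zero_le_one s).2
  have hproj_eq : ∀ s ∈ Set.Icc (0:ℝ) 1, proj s = s := by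
    intro s hs
    rw [hproj]
    simp [Set.projIcc_of_mem zero_le_one hs]
  set γ : ℝ → ℝ := fun s => v (q (proj s)) with hγ
  have hqlip : LipschitzWith ‖w‖₊ q := by
    apply LipschitzWith.of_dist_le_mul
    intro s t
    have h1 : q s - q t = (s - t) • w := by simp only [hq]; module
    rw [dist_eq_norm, dist_eq_norm, h1, norm_smul, coe_nnnorm]
    exact le_of_eq (mul_comm _ _)
  have hprojlip : LipschitzWith 1 proj := by
    have := (LipschitzWith.subtype_val (Set.Icc (0:ℝ) 1)).comp (LipschitzWith.projIcc zero_le_one)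
    rwa [mul_one] at this
  have hγlip : LipschitzWith (K * (‖w‖₊ * 1)) γ := by
    rw [← lipschitzOnWith_univ]
    apply LipschitzOnWith.comp (hlip) ((hqlip.comp hprojlip).lipschitzOnWith)
    intro s _
    exact Metric.ball_subset_closedBall (hseg ζ hζδ (proj s) (hprojmem s))
  have hdγ : ∀ᵐ t ∂(volume.restrict (Set.Ioo (0:ℝ) 1)),
      HasDerivAt γ ((fderiv ℝ v (q t)) w) t ∧ |(fderiv ℝ v (q t)) w| ≤ M * ‖w‖ := by
    have hbad : ∀ᵐ t : ℝ, ¬ (t ∈ ({t : ℝ | a + t • w + ζ ∈ N} ∩ Set.Ioo 0 1)) :=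
      ae_iff.2 (by simp only [not_not]; exact hζkey)
    rw [ae_restrict_iff' measurableSet_Ioo]
    filter_upwards [hbad] with t ht htIoo
    have htIcc : t ∈ Set.Icc (0:ℝ) 1 := Set.mem_Icc_of_Ioo htIoo
    have hnotN : a + t • w + ζ ∉ N := fun hN => ht ⟨hN, htIoo⟩
    have hmem : q t ∈ Metric.ball z R := hseg ζ hζδ t htIcc
    obtain ⟨hdiff, hbound⟩ := hNP _ hnotN hmem
    have hq' : HasDerivAt q w t := by
      have h1 : HasDerivAt (fun s : ℝ => s • w) ((1:ℝ) • w) t :=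
        (hasDerivAt_id t).smul_const w
      rw [one_smul] at h1
      exact (h1.const_add a).add_const ζ
    have hvq : HasDerivAt (v ∘ q) ((fderiv ℝ v (q t)) w) t :=
      (hdiff.hasFDerivAt).comp_hasDerivAt t hq'
    constructor
    · apply hvq.congr_of_eventuallyEq
      filter_upwards [isOpen_Ioo.eventually_mem htIoo] with s hs
      rw [hγ]
      simp only [Function.comp_apply]
      rw [hproj_eq s (Set.mem_Icc_of_Ioo hs)]
    · calc |(fderiv ℝ v (q t)) w| ≤ ‖fderiv ℝ v (q t)‖ * ‖w‖ :=
          (fderiv ℝ v (q t)).le_opNorm w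
        _ ≤ M * ‖w‖ := mul_le_mul_of_nonneg_right hbound (norm_nonneg w)
  have hmain : |γ 1 - γ 0| ≤ M * ‖w‖ := lipFTC hγlip _ hdγ
  have hγ1 : γ 1 = v (b + ζ) := by
    have h1 : proj 1 = 1 := hproj_eq 1 (Set.right_mem_Icc.2 zero_le_one)
    simp only [hγ, h1, hq]
    congr 1
    rw [hw]
    module
  have hγ0 : γ 0 = v (a + ζ) := by
    have h0 : proj 0 = 0 := hproj_eq 0 (Set.left_mem_Icc.2 zero_le_one)
    simp only [hγ, h0, hq]
    congr 1
    module
  -- assemble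
  have haζ : a + ζ ∈ Metric.closedBall z R := by
    have := hseg ζ hζδ 0 (Set.left_mem_Icc.2 zero_le_one)
    simpa using Metric.ball_subset_closedBall this
  have hbζ : b + ζ ∈ Metric.closedBall z R := by
    have := hseg ζ hζδ 1 (Set.right_mem_Icc.2 zero_le_one)
    have h2 : a + (1:ℝ) • w + ζ = b + ζ := by rw [hw]; module
    rw [h2] at this
    exact Metric.ball_subset_closedBall this
  have hamem : a ∈ Metric.closedBall z R := Metric.mem_closedBall.2 (le_of_lt ha)
  have hbmem : b ∈ Metric.closedBall z R := Metric.mem_closedBall.2 (le_of_lt hb)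
  have est1 : |v (a + ζ) - v a| ≤ K * ‖ζ‖ := by
    have := hlip.dist_le_mul _ haζ _ hamem
    rw [Real.dist_eq, dist_eq_norm] at this
    simpa using this
  have est2 : |v (b + ζ) - v b| ≤ K * ‖ζ‖ := by
    have := hlip.dist_le_mul _ hbζ _ hbmem
    rw [Real.dist_eq, dist_eq_norm] at this
    simpa using this
  have hζε : 2 * K * ‖ζ‖ ≤ ε := by
    have h1 : ‖ζ‖ ≤ ε / (2 * K + 1) := le_of_lt (lt_of_lt_of_le hζr (min_le_right _ _))
    have h2 : 2 * (K:ℝ) * ‖ζ‖ ≤ 2 * K * (ε / (2 * K + 1)) :=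
      mul_le_mul_of_nonneg_left h1 (by positivity)
    have h3 : 2 * (K:ℝ) * (ε / (2 * K + 1)) ≤ ε := by
      rw [mul_div_assoc']
      rw [div_le_iff₀ hK1]
      nlinarith [hε.le, NNReal.coe_nonneg K]
    linarith
  rw [hγ1, hγ0] at hmain
  have h1 := abs_le.1 hmain
  have h2 := abs_le.1 est1
  have h3 := abs_le.1 est2
  rw [abs_le]
  constructor
  · linarith [hζε]
  · linarith [hζε]

/-- Extension of `lipAE_ball` to the closed ball. -/
lemma lipAE {n : ℕ} {v : EuclideanSpace ℝ (Fin n) → ℝ} {K : NNReal}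
    {z : EuclideanSpace ℝ (Fin n)} {R M : ℝ} (hM0 : 0 ≤ M)
    (hlip : LipschitzOnWith K v (Metric.closedBall z R))
    (hae : ∀ᵐ x : EuclideanSpace ℝ (Fin n), x ∈ Metric.ball z R →
      (DifferentiableAt ℝ v x ∧ ‖fderiv ℝ v x‖ ≤ M))
    {a b : EuclideanSpace ℝ (Fin n)} (ha : a ∈ Metric.closedBall z R)
    (hb : b ∈ Metric.closedBall z R) :
    |v b - v a| ≤ M * dist b a := by
  rcases lt_or_ge 0 R with hR | hR
  swap
  · rw [Metric.mem_closedBall] at ha hb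
    have haz : dist a z = 0 := le_antisymm (le_trans ha hR) dist_nonneg
    have hbz : dist b z = 0 := le_antisymm (le_trans hb hR) dist_nonneg
    have ha' : a = z := by rwa [dist_eq_zero] at haz
    have hb' : b = z := by rwa [dist_eq_zero] at hbz
    subst ha'; subst hb'
    simp
  · refine le_of_forall_pos_le_add fun ε hε => ?_
    rw [Metric.mem_closedBall] at ha hb
    have hKR1 : (0:ℝ) < 2 * K * R + 1 := by positivity
    set θ : ℝ := max 0 (1 - ε / (2 * K * R + 1)) with hθdef
    have hθ0 : 0 ≤ θ := le_max_left _ _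
    have hθ1 : θ < 1 := by
      apply max_lt one_pos
      have : 0 < ε / (2 * K * R + 1) := by positivity
      linarith
    have h1θ : 1 - θ ≤ ε / (2 * K * R + 1) := by
      have := le_max_right 0 (1 - ε / (2 * K * R + 1))
      linarith
    set aθ : EuclideanSpace ℝ (Fin n) := z + θ • (a - z) with haθ
    set bθ : EuclideanSpace ℝ (Fin n) := z + θ • (b - z) with hbθ
    have hmema : aθ ∈ Metric.ball z R := by
      rw [Metric.mem_ball, dist_eq_norm]
      have : aθ - z = θ • (a - z) := by rw [haθ]; module
      rw [this, norm_smul, Real.norm_eq_abs, abs_of_nonneg hθ0]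
      calc θ * ‖a - z‖ ≤ θ * R := by
            apply mul_le_mul_of_nonneg_left _ hθ0
            rwa [← dist_eq_norm]
        _ < 1 * R := by exact mul_lt_mul_of_pos_right hθ1 hR
        _ = R := one_mul R
    have hmemb : bθ ∈ Metric.ball z R := by
      rw [Metric.mem_ball, dist_eq_norm]
      have : bθ - z = θ • (b - z) := by rw [hbθ]; module
      rw [this, norm_smul, Real.norm_eq_abs, abs_of_nonneg hθ0]
      calc θ * ‖b - z‖ ≤ θ * R := by
            apply mul_le_mul_of_nonneg_left _ hθ0
            rwa [← dist_eq_norm]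
        _ < 1 * R := by exact mul_lt_mul_of_pos_right hθ1 hR
        _ = R := one_mul R
    have hmid := lipAE_ball hM0 hlip hae hmema hmemb
    have hda : dist aθ a ≤ (1 - θ) * R := by
      rw [dist_eq_norm]
      have : aθ - a = (1 - θ) • (z - a) := by rw [haθ]; module
      rw [this, norm_smul, Real.norm_eq_abs, abs_of_nonneg (by linarith)]
      apply mul_le_mul_of_nonneg_left _ (by linarith)
      rw [norm_sub_rev, ← dist_eq_norm]
      exact ha
    have hdb : dist bθ b ≤ (1 - θ) * R := by
      rw [dist_eq_norm]
      have : bθ - b = (1 - θ) • (z - b) := by rw [hbθ]; module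
      rw [this, norm_smul, Real.norm_eq_abs, abs_of_nonneg (by linarith)]
      apply mul_le_mul_of_nonneg_left _ (by linarith)
      rw [norm_sub_rev, ← dist_eq_norm]
      exact hb
    have hdmid : dist bθ aθ ≤ dist b a := by
      rw [dist_eq_norm, dist_eq_norm]
      have : bθ - aθ = θ • (b - a) := by rw [haθ, hbθ]; module
      rw [this, norm_smul, Real.norm_eq_abs, abs_of_nonneg hθ0]
      calc θ * ‖b - a‖ ≤ 1 * ‖b - a‖ :=
            mul_le_mul_of_nonneg_right hθ1.le (norm_nonneg _)
        _ = ‖b - a‖ := one_mul _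
    have est1 : |v aθ - v a| ≤ K * ((1 - θ) * R) := by
      have h := hlip.dist_le_mul _ (Metric.ball_subset_closedBall hmema) _ ha
      rw [Real.dist_eq] at h
      calc |v aθ - v a| ≤ K * dist aθ a := h
        _ ≤ K * ((1 - θ) * R) := mul_le_mul_of_nonneg_left hda K.coe_nonneg
    have est2 : |v bθ - v b| ≤ K * ((1 - θ) * R) := by
      have h := hlip.dist_le_mul _ (Metric.ball_subset_closedBall hmemb) _ hb
      rw [Real.dist_eq] at h
      calc |v bθ - v b| ≤ K * dist bθ b := h
        _ ≤ K * ((1 - θ) * R) := mul_le_mul_of_nonneg_left hdb K.coe_nonneg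
    have hεbd : 2 * K * ((1 - θ) * R) ≤ ε := by
      have h2 : 2 * (K:ℝ) * R * (1 - θ) ≤ 2 * K * R * (ε / (2 * K * R + 1)) :=
        mul_le_mul_of_nonneg_left h1θ (by positivity)
      have h3 : 2 * (K:ℝ) * R * (ε / (2 * K * R + 1)) ≤ ε := by
        rw [mul_div_assoc']
        rw [div_le_iff₀ hKR1]
        nlinarith [hε.le, NNReal.coe_nonneg K, hR.le]
      nlinarith []
    have hmid' : |v bθ - v aθ| ≤ M * dist b a :=
      le_trans hmid (mul_le_mul_of_nonneg_left hdmid hM0)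
    have h1 := abs_le.1 hmid'
    have h2 := abs_le.1 est1
    have h3 := abs_le.1 est2
    rw [abs_le]
    constructor
    · linarith
    · linarith

/-- For an eikonal function, the max over a closed ball grows at rate `c`. -/
lemma eikonal_ball_growth {n : ℕ} {Ω : Set (EuclideanSpace ℝ (Fin n))} (hΩ : IsOpen Ω)
    {u : EuclideanSpace ℝ (Fin n) → ℝ} (hu : ContDiffOn ℝ 1 u Ω) {c : ℝ} (hc : 0 < c)
    (heik : ∀ x ∈ Ω, ‖fderiv ℝ u x‖ = c) {x : EuclideanSpace ℝ (Fin n)} {r : ℝ}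
    (hr : 0 ≤ r) (hball : Metric.closedBall x r ⊆ Ω) :
    ∃ y ∈ Metric.closedBall x r, u x + c * r ≤ u y := by
  have hdiff : ∀ y ∈ Ω, DifferentiableAt ℝ u y := fun y hy =>
    ((hu.differentiableOn one_ne_zero).differentiableAt (hΩ.mem_nhds hy))
  obtain ⟨ystar, hysmem, hysmax⟩ := (isCompact_closedBall x r).exists_isMaxOn
    ⟨x, Metric.mem_closedBall_self hr⟩ ((hu.continuousOn).mono hball)
  refine ⟨ystar, hysmem, ?_⟩
  -- the claim for each 0 ≤ c' < c
  have claim : ∀ c' : ℝ, 0 ≤ c' → c' < c → u x + c' * r ≤ u ystar := by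
    intro c' hc'0 hc'c
    set S : Set ℝ := {t : ℝ | t ∈ Set.Icc 0 r ∧ ∃ y ∈ Metric.closedBall x t, u x + c' * t ≤ u y}
      with hS
    have h0S : (0:ℝ) ∈ S := ⟨⟨le_refl 0, hr⟩, x, Metric.mem_closedBall_self le_rfl, by simp⟩
    have hbdd : BddAbove S := ⟨r, fun t ht => ht.1.2⟩
    set T := sSup S with hT
    have hT0 : 0 ≤ T := le_csSup hbdd h0S
    have hTr : T ≤ r := csSup_le ⟨0, h0S⟩ fun t ht => ht.1.2
    have hsubΩ : Metric.closedBall x T ⊆ Ω :=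
      (Metric.closedBall_subset_closedBall hTr).trans hball
    obtain ⟨yT, hyTmem, hyTmax⟩ := (isCompact_closedBall x T).exists_isMaxOn
      ⟨x, Metric.mem_closedBall_self hT0⟩ ((hu.continuousOn).mono hsubΩ)
    have hTS : u x + c' * T ≤ u yT := by
      refine le_of_forall_pos_le_add fun ε hε => ?_
      have hη : 0 < ε / (c' + 1) := by positivity
      obtain ⟨t, htS, htgt⟩ := exists_lt_of_lt_csSup ⟨0, h0S⟩
        (show T - ε / (c' + 1) < sSup S by rw [← hT]; linarith [sub_lt_self T hη])
      obtain ⟨htIcc, y, hymem, hyineq⟩ := htS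
      have htT : t ≤ T := le_csSup hbdd ⟨htIcc, y, hymem, hyineq⟩
      have hyy : u y ≤ u yT :=
        hyTmax (Metric.closedBall_subset_closedBall htT hymem)
      have hc'η : c' * (ε / (c' + 1)) ≤ ε := by
        rw [mul_div_assoc']
        rw [div_le_iff₀ (by positivity : (0:ℝ) < c' + 1)]
        nlinarith [hε.le]
      have h2 : c' * (T - t) ≤ c' * (ε / (c' + 1)) :=
        mul_le_mul_of_nonneg_left (by linarith) hc'0
      calc u x + c' * T = (u x + c' * t) + c' * (T - t) := by ring
        _ ≤ u yT + c' * (T - t) := by linarith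
        _ ≤ u yT + ε := by linarith
    have hTeq : T = r := by
      by_contra hne
      have hTltr : T < r := lt_of_le_of_ne hTr hne
      have hyTΩ : yT ∈ Ω := hsubΩ hyTmem
      have hd := hdiff yT hyTΩ
      have hnorm : ‖fderiv ℝ u yT‖ = c := heik yT hyTΩ
      set f := fderiv ℝ u yT with hf
      set g := (InnerProductSpace.toDual ℝ (EuclideanSpace ℝ (Fin n))).symm f with hg
      have hgnorm : ‖g‖ = c := by rw [hg, LinearIsometryEquiv.norm_map]; exact hnorm
      set e : EuclideanSpace ℝ (Fin n) := c⁻¹ • g with he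
      have henorm : ‖e‖ = 1 := by
        rw [he, norm_smul, Real.norm_eq_abs, abs_of_pos (inv_pos.2 hc), hgnorm]
        field_simp
      have hfe : f e = c := by
        have h1 : inner ℝ g e = f e := InnerProductSpace.toDual_symm_apply
        rw [← h1, he, real_inner_smul_right, real_inner_self_eq_norm_sq, hgnorm]
        field_simp
      have hline : HasDerivAt (fun t : ℝ => yT + t • e) e 0 := by
        have h1 : HasDerivAt (fun s : ℝ => s • e) ((1:ℝ) • e) 0 :=
          (hasDerivAt_id 0).smul_const e
        rw [one_smul] at h1
        exact h1.const_add yT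
      have hde : HasDerivAt (fun t : ℝ => u (yT + t • e)) c 0 := by
        have hd' : HasFDerivAt u f ((fun t : ℝ => yT + t • e) 0) := by
          simpa using hd.hasFDerivAt
        have := hd'.comp_hasDerivAt 0 hline
        rw [show f e = c from hfe] at this
        exact this
      have hslope := hasDerivAt_iff_tendsto_slope.1 hde
      have hev : ∀ᶠ t in nhdsWithin 0 (Set.Ioi 0),
          c' < slope (fun t : ℝ => u (yT + t • e)) 0 t := by
        have h1 : ∀ᶠ t in nhdsWithin 0 {(0:ℝ)}ᶜ,
            c' < slope (fun t : ℝ => u (yT + t • e)) 0 t :=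
          hslope.eventually (eventually_gt_nhds hc'c)
        exact h1.filter_mono (nhdsWithin_mono 0 fun t ht =>
          Set.mem_compl_singleton_iff.2 (ne_of_gt ht))
      have hev2 : ∀ᶠ t in nhdsWithin 0 (Set.Ioi 0), t < r - T :=
        eventually_nhdsWithin_of_eventually_nhds
          (eventually_lt_nhds (by linarith : (0:ℝ) < r - T))
      obtain ⟨t, hslopet, htlt, ht0'⟩ := (hev.and (hev2.and self_mem_nhdsWithin)).exists
      have ht0 : (0:ℝ) < t := ht0'
      have hslope2 : c' * t < u (yT + t • e) - u yT := by
        rw [slope_def_field] at hslopet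
        have h2 : (u (yT + t • e) - u (yT + (0:ℝ) • e)) / (t - 0) =
            (u (yT + t • e) - u yT) / t := by
          congr 2 <;> simp
        rw [h2] at hslopet
        rw [lt_div_iff₀ ht0] at hslopet
        linarith [hslopet]
      have hnew : T + t ∈ S := by
        refine ⟨⟨by linarith, by linarith⟩, yT + t • e, ?_, ?_⟩
        · rw [Metric.mem_closedBall]
          calc dist (yT + t • e) x ≤ dist (yT + t • e) yT + dist yT x := dist_triangle _ _ _
            _ ≤ t + T := by
                have h3 : dist (yT + t • e) yT = t := by
                  rw [dist_eq_norm]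
                  have : yT + t • e - yT = t • e := by module
                  rw [this, norm_smul, henorm, Real.norm_eq_abs, abs_of_pos ht0, mul_one]
                rw [h3]
                linarith [Metric.mem_closedBall.1 hyTmem]
            _ = T + t := by ring
        · have : u x + c' * (T + t) = (u x + c' * T) + c' * t := by ring
          rw [this]
          linarith [hTS, hslope2]
      have := le_csSup hbdd hnew
      linarith
    rw [hTeq] at hTS
    have : u yT ≤ u ystar := hysmax (by rw [← hTeq]; exact hyTmem)
    linarith
  -- pass to the limit c' → c
  rcases eq_or_lt_of_le hr with hr0 | hrpos
  · have := claim 0 le_rfl hc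
    rw [← hr0] at this ⊢
    simpa using this
  · by_contra hcon
    push_neg at hcon
    have h0 : u x ≤ u ystar := by simpa using claim 0 le_rfl hc
    set d := (u ystar - u x) / r with hd
    have hd0 : 0 ≤ d := div_nonneg (by linarith) hr
    have hdc : d < c := by
      rw [hd, div_lt_iff₀ hrpos]
      linarith [hcon]
    set c' := (d + c) / 2 with hc'
    have h1 : u x + c' * r ≤ u ystar := claim c' (by linarith) (by linarith [hdc])
    have h2 : d * r = u ystar - u x := by
      rw [hd]; field_simp
    nlinarith [hrpos]

/-- Chain construction: from any interior point we can reach the boundary along a chain on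
which `u` increases at rate `c` while `v` changes at rate at most `M`. -/
lemma chain_reach_boundary {n : ℕ} {Ω Ω' : Set (EuclideanSpace ℝ (Fin n))}
    (hΩ : IsOpen Ω) {u v : EuclideanSpace ℝ (Fin n) → ℝ}
    (hu : ContDiffOn ℝ 1 u Ω) {c : ℝ} (hc : 0 < c)
    (heik : ∀ x ∈ Ω, ‖fderiv ℝ u x‖ = c)
    (hΩ' : IsOpen Ω') (hsub : closure Ω' ⊆ Ω) (hcpt : IsCompact (closure Ω'))
    {K : NNReal} {M : ℝ} (hM0 : 0 ≤ M)
    (hvlip : ∀ x ∈ Ω', LipschitzOnWith K v (Metric.closedBall x (Metric.infDist x Ω'ᶜ)))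
    (hvcont : ContinuousOn v (closure Ω'))
    (hae : ∀ᵐ x : EuclideanSpace ℝ (Fin n), x ∈ Ω' →
      (DifferentiableAt ℝ v x ∧ ‖fderiv ℝ v x‖ ≤ M))
    {x₀ : EuclideanSpace ℝ (Fin n)} (hx₀ : x₀ ∈ Ω') :
    ∃ R : ℝ, 0 < R ∧ ∃ p ∈ frontier Ω', u x₀ + c * R ≤ u p ∧ |v p - v x₀| ≤ M * R := by
  -- the complement is nonempty
  have hnontriv : Nontrivial (EuclideanSpace ℝ (Fin n)) := by
    by_contra hcon
    rw [not_nontrivial_iff_subsingleton] at hcon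
    have hx₀Ω : x₀ ∈ Ω := hsub (subset_closure hx₀)
    have h0 : fderiv ℝ u x₀ = 0 := by
      apply ContinuousLinearMap.ext
      intro e
      rw [Subsingleton.elim e 0]
      simp
    have := heik x₀ hx₀Ω
    rw [h0] at this
    simp at this
    linarith
  have hne : Ω'ᶜ.Nonempty := by
    by_contra hcon
    rw [Set.not_nonempty_iff_eq_empty, Set.compl_empty_iff] at hcon
    haveI := hnontriv
    haveI : NoncompactSpace (EuclideanSpace ℝ (Fin n)) := NormedSpace.noncompactSpace ℝ _
    have : IsCompact (Set.univ : Set (EuclideanSpace ℝ (Fin n))) := by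
      rw [← closure_univ, ← hcon]
      exact hcpt
    exact NoncompactSpace.noncompact_univ this
  have hclosedc : IsClosed Ω'ᶜ := isClosed_compl_iff.2 hΩ'
  set ρ : EuclideanSpace ℝ (Fin n) → ℝ := fun x => Metric.infDist x Ω'ᶜ with hρ
  have hρcont : Continuous ρ := Metric.continuous_infDist_pt _
  have hρmem : ∀ x, x ∈ Ω'ᶜ ↔ ρ x = 0 := fun x => hclosedc.mem_iff_infDist_zero hne
  have hρ0 : ∀ x ∈ Ω', 0 < ρ x := by
    intro x hx
    rcases lt_or_eq_of_le (Metric.infDist_nonneg (x := x) (s := Ω'ᶜ)) with h | h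
    · exact h
    · exact absurd ((hρmem x).2 h.symm) (by simpa using hx)
  have hballΩ' : ∀ x, Metric.ball x (ρ x) ⊆ Ω' := fun x => Metric.ball_infDist_compl_subset
  have hcball : ∀ x ∈ closure Ω', Metric.closedBall x (ρ x) ⊆ closure Ω' := by
    intro x hx
    by_cases hxΩ : x ∈ Ω'
    · exact Metric.closedBall_infDist_compl_subset_closure hxΩ
    · have : ρ x = 0 := (hρmem x).1 hxΩ
      rw [this, Metric.closedBall_zero]
      exact Set.singleton_subset_iff.2 hx
  -- one step of the chain
  have step : ∀ x ∈ closure Ω', ∃ y, y ∈ closure Ω' ∧ dist y x ≤ ρ x ∧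
      u x + c * ρ x ≤ u y ∧ |v y - v x| ≤ M * ρ x := by
    intro x hx
    by_cases hxΩ : x ∈ Ω'
    · obtain ⟨y, hymem, hyineq⟩ := eikonal_ball_growth hΩ hu hc heik
        (Metric.infDist_nonneg) ((hcball x hx).trans hsub)
      have hydist : dist y x ≤ ρ x := Metric.mem_closedBall.1 hymem
      refine ⟨y, hcball x hx hymem, hydist, hyineq, ?_⟩
      have hae2 : ∀ᵐ z : EuclideanSpace ℝ (Fin n), z ∈ Metric.ball x (ρ x) →
          (DifferentiableAt ℝ v z ∧ ‖fderiv ℝ v z‖ ≤ M) := by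
        filter_upwards [hae] with z hz hzball
        exact hz (hballΩ' x hzball)
      have := lipAE hM0 (hvlip x hxΩ) hae2 (Metric.mem_closedBall_self Metric.infDist_nonneg)
        hymem
      calc |v y - v x| ≤ M * dist y x := this
        _ ≤ M * ρ x := mul_le_mul_of_nonneg_left hydist hM0
    · have h0 : ρ x = 0 := (hρmem x).1 hxΩ
      exact ⟨x, hx, by simp [h0], by simp [h0], by simp [h0]⟩
  -- the chain
  classical
  set next : EuclideanSpace ℝ (Fin n) → EuclideanSpace ℝ (Fin n) :=
    fun x => if h : x ∈ closure Ω' then (step x h).choose else x with hnextdef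
  have hnext : ∀ x (hx : x ∈ closure Ω'), next x ∈ closure Ω' ∧ dist (next x) x ≤ ρ x ∧
      u x + c * ρ x ≤ u (next x) ∧ |v (next x) - v x| ≤ M * ρ x := by
    intro x hx
    rw [hnextdef]
    simp only [dif_pos hx]
    exact (step x hx).choose_spec
  set seq : ℕ → EuclideanSpace ℝ (Fin n) := fun k => next^[k] x₀ with hseqdef
  have hseqS : ∀ k, seq (k + 1) = next (seq k) := fun k =>
    Function.iterate_succ_apply' next k x₀
  have hmem : ∀ k, seq k ∈ closure Ω' := by
    intro k
    induction k with
    | zero => exact subset_closure hx₀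
    | succ k ih => rw [hseqS]; exact (hnext _ ih).1
  have hseq0 : seq 0 = x₀ := rfl
  have hsum : ∀ k, u x₀ + c * (∑ i ∈ Finset.range k, ρ (seq i)) ≤ u (seq k) := by
    intro k
    induction k with
    | zero => rw [hseq0]; simp
    | succ k ih =>
        rw [hseqS, Finset.sum_range_succ]
        have := (hnext _ (hmem k)).2.2.1
        calc u x₀ + c * (∑ i ∈ Finset.range k, ρ (seq i) + ρ (seq k))
            = (u x₀ + c * ∑ i ∈ Finset.range k, ρ (seq i)) + c * ρ (seq k) := by ring
          _ ≤ u (seq k) + c * ρ (seq k) := by linarith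
          _ ≤ u (next (seq k)) := by linarith
  have hvtel : ∀ k, |v (seq k) - v x₀| ≤ M * (∑ i ∈ Finset.range k, ρ (seq i)) := by
    intro k
    induction k with
    | zero => rw [hseq0]; simp
    | succ k ih =>
        rw [hseqS, Finset.sum_range_succ]
        have hstep := (hnext _ (hmem k)).2.2.2
        calc |v (next (seq k)) - v x₀|
            ≤ |v (next (seq k)) - v (seq k)| + |v (seq k) - v x₀| := by
              have := abs_add_le (v (next (seq k)) - v (seq k)) (v (seq k) - v x₀)
              calc |v (next (seq k)) - v x₀|
                  = |(v (next (seq k)) - v (seq k)) + (v (seq k) - v x₀)| := by ring_nf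
                _ ≤ _ := this
          _ ≤ M * ρ (seq k) + M * (∑ i ∈ Finset.range k, ρ (seq i)) := by linarith
          _ = M * (∑ i ∈ Finset.range k, ρ (seq i) + ρ (seq k)) := by ring
  have hstepdist : ∀ k, dist (seq (k + 1)) (seq k) ≤ ρ (seq k) := by
    intro k
    rw [hseqS]
    exact (hnext _ (hmem k)).2.1
  -- summability
  obtain ⟨ym, hymmem, hymmax⟩ := hcpt.exists_isMaxOn ⟨x₀, subset_closure hx₀⟩
    ((hu.continuousOn).mono hsub)
  have hsummable : Summable fun i => ρ (seq i) := by
    apply summable_of_sum_range_le (fun i => Metric.infDist_nonneg)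
    intro k
    have h1 := hsum k
    have h2 : u (seq k) ≤ u ym := hymmax (hmem k)
    rw [show (∑ i ∈ Finset.range k, ρ (seq i)) =
      c * (∑ i ∈ Finset.range k, ρ (seq i)) / c by field_simp]
    rw [div_le_iff₀ hc]
    calc c * (∑ i ∈ Finset.range k, ρ (seq i)) ≤ u ym - u x₀ := by linarith
      _ = (u ym - u x₀) / c * c := by field_simp
  set R : ℝ := ∑' i, ρ (seq i) with hR
  have hR0 : 0 < R := by
    have h1 : ρ (seq 0) ≤ R := hsummable.le_tsum 0 fun j _ => Metric.infDist_nonneg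
    have h2 : 0 < ρ (seq 0) := hρ0 x₀ hx₀
    linarith
  -- convergence
  have hcauchy : CauchySeq seq := by
    apply cauchySeq_of_summable_dist
    apply Summable.of_nonneg_of_le (fun n => dist_nonneg) (fun n => ?_) hsummable
    rw [dist_comm]
    exact hstepdist n
  obtain ⟨p, hp⟩ := cauchySeq_tendsto_of_complete hcauchy
  have hpmem : p ∈ closure Ω' := isClosed_closure.mem_of_tendsto hp
    (Eventually.of_forall hmem)
  have hρp : ρ p = 0 := by
    have h1 : Tendsto (fun k => ρ (seq k)) atTop (nhds (ρ p)) :=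
      (hρcont.continuousAt).tendsto.comp hp
    have h2 : Tendsto (fun k => ρ (seq k)) atTop (nhds 0) :=
      hsummable.tendsto_atTop_zero
    exact tendsto_nhds_unique h1 h2
  have hpF : p ∈ frontier Ω' := by
    rw [hΩ'.frontier_eq]
    exact ⟨hpmem, by simpa using (hρmem p).2 hρp⟩
  have hS : Tendsto (fun k => ∑ i ∈ Finset.range k, ρ (seq i)) atTop (nhds R) :=
    hsummable.hasSum.tendsto_sum_nat
  have hulim : Tendsto (fun k => u (seq k)) atTop (nhds (u p)) :=
    (((hu.continuousOn).continuousAt (hΩ.mem_nhds (hsub hpmem))).tendsto).comp hp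
  have huineq : u x₀ + c * R ≤ u p := by
    apply le_of_tendsto_of_tendsto' (tendsto_const_nhds.add (hS.const_mul c)) hulim hsum
  have hvlim : Tendsto (fun k => v (seq k)) atTop (nhds (v p)) :=
    ((hvcont p hpmem).tendsto).comp
      (tendsto_nhdsWithin_of_tendsto_nhds_of_eventually_within seq hp
        (Eventually.of_forall hmem))
  have hvineq : |v p - v x₀| ≤ M * R := by
    apply le_of_tendsto_of_tendsto' ((hvlim.sub_const (v x₀)).abs) (hS.const_mul M) hvtel
  exact ⟨R, hR0, p, hpF, huineq, hvineq⟩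

theorem stmt_19 {n : ℕ} (Ω : Set (EuclideanSpace ℝ (Fin n))) (hΩ : IsOpen Ω)
    (u : EuclideanSpace ℝ (Fin n) → ℝ) (hu : ContDiffOn ℝ 1 u Ω)
    (c : ℝ) (hc : 0 ≤ c) (heik : ∀ x ∈ Ω, ‖fderiv ℝ u x‖ = c) :
    ∀ Ω' : Set (EuclideanSpace ℝ (Fin n)), IsOpen Ω' → closure Ω' ⊆ Ω →
      IsCompact (closure Ω') →
    ∀ φ : EuclideanSpace ℝ (Fin n) → ℝ, ∀ L : NNReal,
      LipschitzOnWith L φ (closure Ω') → (∀ y ∈ frontier Ω', φ y = 0) →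
      essSup (fun x => ‖fderiv ℝ u x‖) (volume.restrict Ω') ≤
        essSup (fun x => ‖fderiv ℝ u x + fderiv ℝ φ x‖) (volume.restrict Ω') := by
  intro Ω' hΩ' hsub hcpt φ L hφlip hφ0
  rcases Set.eq_empty_or_nonempty Ω' with rfl | ⟨x₀, hx₀⟩
  · rw [Measure.restrict_empty]
    have h := essSup_congr_ae (μ := (0 : Measure (EuclideanSpace ℝ (Fin n))))
      (f := fun x => ‖fderiv ℝ u x‖) (g := fun x => ‖fderiv ℝ u x + fderiv ℝ φ x‖)
      (by simp [Filter.EventuallyEq])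
    rw [h]
  · set μ := volume.restrict Ω' with hμdef
    have hμ : μ ≠ 0 := by
      have hpos := hΩ'.measure_pos volume ⟨x₀, hx₀⟩
      intro h0
      rw [hμdef, Measure.restrict_eq_zero] at h0
      exact hpos.ne' h0
    have heqv : (fun x => ‖fderiv ℝ u x‖) =ᵐ[μ] fun _ => c := by
      rw [hμdef, Filter.EventuallyEq, ae_restrict_iff' hΩ'.measurableSet]
      exact Eventually.of_forall fun x hx => heik x (hsub (subset_closure hx))
    have hLHS : essSup (fun x => ‖fderiv ℝ u x‖) μ = c := by
      rw [essSup_congr_ae heqv, essSup_const c hμ]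
    rw [hLHS]
    set g : EuclideanSpace ℝ (Fin n) → ℝ := fun x => ‖fderiv ℝ u x + fderiv ℝ φ x‖ with hgdef
    have hdiffu : ∀ x ∈ Ω, DifferentiableAt ℝ u x := fun x hx =>
      (hu.differentiableOn one_ne_zero).differentiableAt (hΩ.mem_nhds hx)
    have hgbd : ∀ x ∈ Ω', g x ≤ c + L := by
      intro x hx
      have hnb : closure Ω' ∈ nhds x := mem_of_superset (hΩ'.mem_nhds hx) subset_closure
      have hub : ‖fderiv ℝ φ x‖ ≤ L := norm_fderiv_le_of_lipschitzOn ℝ hnb hφlip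
      calc g x ≤ ‖fderiv ℝ u x‖ + ‖fderiv ℝ φ x‖ := norm_add_le _ _
        _ ≤ c + L := by
            rw [heik x (hsub (subset_closure hx))]
            linarith
    have hbdd : IsBoundedUnder (· ≤ ·) (ae μ) g := by
      refine ⟨c + L, ?_⟩
      rw [eventually_map, hμdef, ae_restrict_iff' hΩ'.measurableSet]
      exact Eventually.of_forall hgbd
    by_contra hcon
    push_neg at hcon
    set M := essSup g μ with hM
    have hMc : M < c := hcon
    haveI : (ae μ).NeBot := ae_neBot.2 hμ
    have hM0 : 0 ≤ M :=
      le_limsup_of_frequently_le (Frequently.of_forall fun x => norm_nonneg _) hbdd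
    have haeM : ∀ᵐ x ∂μ, g x ≤ M := ae_le_essSup hbdd
    set v : EuclideanSpace ℝ (Fin n) → ℝ := fun x => u x + φ x with hvdef
    have hae : ∀ᵐ x : EuclideanSpace ℝ (Fin n), x ∈ Ω' →
        (DifferentiableAt ℝ v x ∧ ‖fderiv ℝ v x‖ ≤ M) := by
      have hmemae : ∀ᵐ x ∂μ, x ∈ Ω' := by
        rw [hμdef]
        exact ae_restrict_mem hΩ'.measurableSet
      rw [← ae_restrict_iff' hΩ'.measurableSet, ← hμdef]
      filter_upwards [haeM, hmemae] with x hgx hxΩ'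
      have hxΩ : x ∈ Ω := hsub (subset_closure hxΩ')
      have hud : DifferentiableAt ℝ u x := hdiffu x hxΩ
      have hφd : DifferentiableAt ℝ φ x := by
        by_contra hnd
        rw [hgdef] at hgx
        simp only [fderiv_zero_of_not_differentiableAt hnd, add_zero] at hgx
        rw [heik x hxΩ] at hgx
        linarith
      refine ⟨hud.add hφd, ?_⟩
      rw [hvdef]
      rw [fderiv_fun_add hud hφd]
      exact hgx
    have hc0 : 0 < c := lt_of_le_of_lt hM0 hMc
    set K : NNReal := c.toNNReal + L with hK
    have hvlip : ∀ x ∈ Ω',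
        LipschitzOnWith K v (Metric.closedBall x (Metric.infDist x Ω'ᶜ)) := by
      intro x hx
      have hcb : Metric.closedBall x (Metric.infDist x Ω'ᶜ) ⊆ closure Ω' :=
        Metric.closedBall_infDist_compl_subset_closure hx
      have hulip : LipschitzOnWith c.toNNReal u
          (Metric.closedBall x (Metric.infDist x Ω'ᶜ)) := by
        apply Convex.lipschitzOnWith_of_nnnorm_fderiv_le
          (fun y hy => hdiffu y (hsub (hcb hy)))
          (fun y hy => ?_) (convex_closedBall _ _)
        rw [← norm_toNNReal, heik y (hsub (hcb hy))]
      exact hulip.add (hφlip.mono hcb)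
    have hvcont : ContinuousOn v (closure Ω') :=
      ((hu.continuousOn).mono hsub).add hφlip.continuousOn
    obtain ⟨R₁, hR₁, p, hpF, hup, hvp⟩ :=
      chain_reach_boundary hΩ hu hc0 heik hΩ' hsub hcpt hM0 hvlip hvcont hae hx₀
    -- negated versions
    have hu2 : ContDiffOn ℝ 1 (fun x => -u x) Ω := hu.neg
    have heik2 : ∀ x ∈ Ω, ‖fderiv ℝ (fun y => -u y) x‖ = c := by
      intro x hx
      rw [fderiv_fun_neg, norm_neg]
      exact heik x hx
    have hvlip2 : ∀ x ∈ Ω',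
        LipschitzOnWith K (fun y => -v y) (Metric.closedBall x (Metric.infDist x Ω'ᶜ)) :=
      fun x hx => (hvlip x hx).neg
    have hvcont2 : ContinuousOn (fun y => -v y) (closure Ω') := hvcont.neg
    have hae2 : ∀ᵐ x : EuclideanSpace ℝ (Fin n), x ∈ Ω' →
        (DifferentiableAt ℝ (fun y => -v y) x ∧ ‖fderiv ℝ (fun y => -v y) x‖ ≤ M) := by
      filter_upwards [hae] with x hx hmem
      obtain ⟨hd, hb⟩ := hx hmem
      refine ⟨hd.neg, ?_⟩
      rw [fderiv_fun_neg, norm_neg]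
      exact hb
    obtain ⟨R₂, hR₂, q, hqF, huq, hvq⟩ :=
      chain_reach_boundary hΩ hu2 hc0 heik2 hΩ' hsub hcpt hM0 hvlip2 hvcont2 hae2 hx₀
    -- combine
    have hvpu : v p = u p := by rw [hvdef]; simp [hφ0 p hpF]
    have hvqu : v q = u q := by rw [hvdef]; simp [hφ0 q hqF]
    have hvx₀ : v x₀ = u x₀ + φ x₀ := rfl
    have habs1 := abs_le.1 hvp
    have habs2 := abs_le.1 hvq
    have h1 : (c - M) * R₁ ≤ φ x₀ := by nlinarith [habs1.2, hup, hvpu, hvx₀]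
    have h2 : (c - M) * R₂ ≤ -φ x₀ := by nlinarith [habs2.2, huq, hvqu, hvx₀]
    nlinarith [h1, h2, hR₁, hR₂, hMc]
end
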